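/- Let L' be a superintuitionistic logic with Box ⊊ L' such that L' is of infinite depth. Then there is some k such that every finite rooted poset that is a frame for L' has stack-depth at most k. -/

import Mathlib

/-! # Common framework: superintuitionistic logics, Kripke frames and models -/

/-! ## Intuitionistic propositional formulas -/

inductive Form : Type
  | var : ℕ → Form
  | bot : Form
  | top : Form
  | and : Form → Form → Form
  | or  : Form → Form → Form
  | imp : Form → Form → Form
deriving DecidableEq

namespace Form

/-- Implication depth of a formula. -/
def depth : Form → ℕ
  | var _ => 0
  | bot => 0
  | top => 0
  | and φ ψ => max φ.depth ψ.depth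
  | or φ ψ => max φ.depth ψ.depth
  | imp φ ψ => max φ.depth ψ.depth + 1

/-- All propositional variables of the formula are among `p_0, …, p_{m-1}`. -/
def varsLt (m : ℕ) : Form → Prop
  | var p => p < m
  | bot => True
  | top => True
  | and φ ψ => φ.varsLt m ∧ ψ.varsLt m
  | or φ ψ => φ.varsLt m ∧ ψ.varsLt m
  | imp φ ψ => φ.varsLt m ∧ ψ.varsLt m

/-- Uniform substitution. -/
def subst (σ : ℕ → Form) : Form → Form
  | var p => σ p
  | bot => bot
  | top => top
  | and φ ψ => and (φ.subst σ) (ψ.subst σ)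
  | or φ ψ => or (φ.subst σ) (ψ.subst σ)
  | imp φ ψ => imp (φ.subst σ) (ψ.subst σ)

/-- Biconditional. -/
def iff (φ ψ : Form) : Form := and (imp φ ψ) (imp ψ φ)

/-- Negation. -/
def neg (φ : Form) : Form := imp φ bot

end Form

/-! ## IPC and superintuitionistic logics -/

/-- A Hilbert-style axiomatization of intuitionistic propositional logic. -/
inductive IPC : Form → Prop
  | ax1 (φ ψ : Form) : IPC (.imp φ (.imp ψ φ))
  | ax2 (φ ψ χ : Form) :
      IPC (.imp (.imp φ (.imp ψ χ)) (.imp (.imp φ ψ) (.imp φ χ)))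
  | andE1 (φ ψ : Form) : IPC (.imp (.and φ ψ) φ)
  | andE2 (φ ψ : Form) : IPC (.imp (.and φ ψ) ψ)
  | andI (φ ψ : Form) : IPC (.imp φ (.imp ψ (.and φ ψ)))
  | orI1 (φ ψ : Form) : IPC (.imp φ (.or φ ψ))
  | orI2 (φ ψ : Form) : IPC (.imp ψ (.or φ ψ))
  | orE (φ ψ χ : Form) :
      IPC (.imp (.imp φ χ) (.imp (.imp ψ χ) (.imp (.or φ ψ) χ)))
  | botE (φ : Form) : IPC (.imp .bot φ)
  | topI : IPC .top
  | mp (φ ψ : Form) : IPC (.imp φ ψ) → IPC φ → IPC ψ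

/-- The set of theorems of IPC. -/
def IPCSet : Set Form := {φ | IPC φ}

/-- A superintuitionistic logic: a set of formulas containing all theorems of
IPC, closed under modus ponens and uniform substitution. -/
def IsSILogic (L : Set Form) : Prop :=
  IPCSet ⊆ L ∧
  (∀ φ ψ : Form, Form.imp φ ψ ∈ L → φ ∈ L → ψ ∈ L) ∧
  (∀ (φ : Form) (σ : ℕ → Form), φ ∈ L → φ.subst σ ∈ L)

/-- `oplus L Γ` is the least superintuitionistic logic containing `L` and `Γ`
(written `L ⊕ Γ`). -/
def oplus (L Γ : Set Form) : Set Form :=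
  ⋂₀ {M : Set Form | IsSILogic M ∧ L ⊆ M ∧ Γ ⊆ M}

/-- A logic is `n`-uniform if every formula is provably equivalent in it to a
formula of implication depth at most `n`. -/
def Uniform (L : Set Form) (n : ℕ) : Prop :=
  ∀ φ : Form, ∃ ψ : Form, ψ.depth ≤ n ∧ Form.iff φ ψ ∈ L

/-- A logic is locally tabular if over each finite tuple of variables there are
only finitely many formulas up to provable equivalence. -/
def LocallyTabular (L : Set Form) : Prop :=
  ∀ m : ℕ, ∃ Φ : Finset Form, ∀ φ : Form, φ.varsLt m → ∃ ψ ∈ Φ, Form.iff φ ψ ∈ L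

/-! ## Kripke frames (posets) -/

structure Frame : Type 1 where
  W : Type
  le : W → W → Prop
  refl : ∀ x, le x x
  trans : ∀ x y z, le x y → le y z → le x z
  antisymm : ∀ x y, le x y → le y x → x = y

namespace Frame

def lt (F : Frame) (a b : F.W) : Prop := F.le a b ∧ a ≠ b

/-- A valuation is persistent if it is preserved upwards. -/
def Persistent (F : Frame) (V : ℕ → F.W → Prop) : Prop :=
  ∀ p a b, F.le a b → V p a → V p b

/-- Kripke forcing. -/
def force (F : Frame) (V : ℕ → F.W → Prop) : Form → F.W → Prop
  | .var p, w => V p w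
  | .bot, _ => False
  | .top, _ => True
  | .and φ ψ, w => F.force V φ w ∧ F.force V ψ w
  | .or φ ψ, w => F.force V φ w ∨ F.force V ψ w
  | .imp φ ψ, w => ∀ v, F.le w v → F.force V φ v → F.force V ψ v

/-- `F ⊩ φ`. -/
def Valid (F : Frame) (φ : Form) : Prop :=
  ∀ V : ℕ → F.W → Prop, F.Persistent V → ∀ w : F.W, F.force V φ w

def Rooted (F : Frame) : Prop := ∃ r, ∀ w, F.le r w

/-- The subposet on a subset of the carrier. -/
def restrict (F : Frame) (s : Set F.W) : Frame where
  W := s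
  le a b := F.le a.1 b.1
  refl a := F.refl a.1
  trans a b c h1 h2 := F.trans a.1 b.1 c.1 h1 h2
  antisymm a b h1 h2 := Subtype.ext (F.antisymm a.1 b.1 h1 h2)

/-- The rooted upset `↑z`. -/
def up (F : Frame) (z : F.W) : Frame := F.restrict {w | F.le z w}

/-- There is a chain of `d` elements in `↑w` starting at `w`. -/
def hasChainUp (F : Frame) (w : F.W) (d : ℕ) : Prop :=
  ∃ f : Fin d → F.W, (∀ i : Fin d, (i : ℕ) = 0 → f i = w) ∧
    (∀ i j : Fin d, (i : ℕ) < (j : ℕ) → F.lt (f i) (f j))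

/-- The depth of `w` is `d`: the longest chain in `↑w` has exactly `d` elements. -/
def depthEq (F : Frame) (w : F.W) (d : ℕ) : Prop :=
  F.hasChainUp w d ∧ ¬ F.hasChainUp w (d + 1)

/-- The covering relation of the poset. -/
def covBy (F : Frame) (a b : F.W) : Prop :=
  F.lt a b ∧ ∀ c, F.lt a c → F.lt c b → False

end Frame

/-- A p-morphism of posets. -/
def IsPMorphism (P Q : Frame) (f : P.W → Q.W) : Prop :=
  (∀ a b, P.le a b → Q.le (f a) (f b)) ∧
  (∀ a b, Q.le (f a) b → ∃ a', P.le a a' ∧ f a' = b)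

/-- `Q` is a p-morphic image of `P`. -/
def PMorphicImage (P Q : Frame) : Prop :=
  ∃ f : P.W → Q.W, IsPMorphism P Q f ∧ Function.Surjective f

/-- Order isomorphism of posets. -/
def FrameIso (P Q : Frame) : Prop :=
  ∃ f : P.W → Q.W, Function.Bijective f ∧ ∀ a b, P.le a b ↔ Q.le (f a) (f b)

/-- The logic of a class of posets. -/
def LogK (K : Set Frame) : Set Form := {φ | ∀ F ∈ K, F.Valid φ}

/-- The logic of a single poset. -/
def FrameLog (F : Frame) : Set Form := {φ | F.Valid φ}

/-- `J` is a Yankov formula for the finite rooted poset `Q`: a finite poset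
refutes `J` exactly when `Q` is isomorphic to a rooted upset of one of its
p-morphic images. -/
def IsYankov (J : Form) (Q : Frame) : Prop :=
  ∀ P : Frame, Finite P.W →
    (¬ P.Valid J ↔ ∃ G : Frame, PMorphicImage P G ∧ ∃ z : G.W, FrameIso (G.up z) Q)

/-! ## Rooted Kripke models over `n` propositional variables -/

structure Model (n : ℕ) : Type 1 where
  W : Type
  le : W → W → Prop
  refl : ∀ x, le x x
  trans : ∀ x y z, le x y → le y z → le x z
  antisymm : ∀ x y, le x y → le y x → x = y
  root : W
  rooted : ∀ w, le root w
  col : W → Set (Fin n)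
  mono : ∀ a b, le a b → col a ⊆ col b

namespace Model

/-- The underlying poset of a model. -/
def frame {n : ℕ} (M : Model n) : Frame :=
  ⟨M.W, M.le, M.refl, M.trans, M.antisymm⟩

def force {n : ℕ} (M : Model n) : Form → M.W → Prop
  | .var p, w => ∃ h : p < n, (⟨p, h⟩ : Fin n) ∈ M.col w
  | .bot, _ => False
  | .top, _ => True
  | .and φ ψ, w => M.force φ w ∧ M.force ψ w
  | .or φ ψ, w => M.force φ w ∨ M.force ψ w
  | .imp φ ψ, w => ∀ v, M.le w v → M.force φ v → M.force ψ v

/-- Satisfaction at the root of the model. -/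
def Sat {n : ℕ} (M : Model n) (φ : Form) : Prop := M.force φ M.root

/-- (Full) bisimilarity of two rooted models. -/
def Bisim {n : ℕ} (M N : Model n) : Prop :=
  ∃ S : M.W → N.W → Prop,
    S M.root N.root ∧
    (∀ a b, S a b → M.col a = N.col b) ∧
    (∀ a b a', S a b → M.le a a' → ∃ b', N.le b b' ∧ S a' b') ∧
    (∀ a b b', S a b → N.le b b' → ∃ a', M.le a a' ∧ S a' b')

/-- `k`-bisimilarity of the points `x, y`, via a decreasing chain
`S k ⊆ ⋯ ⊆ S 0` of relations. -/
def NBisimAt {n : ℕ} (M N : Model n) (k : ℕ) (x : M.W) (y : N.W) : Prop :=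
  ∃ S : ℕ → M.W → N.W → Prop,
    (∀ j a b, S (j + 1) a b → S j a b) ∧
    S k x y ∧
    (∀ a b, S 0 a b → M.col a = N.col b) ∧
    (∀ j a b a', j < k → S (j + 1) a b → M.le a a' →
        ∃ b', N.le b b' ∧ S j a' b') ∧
    (∀ j a b b', j < k → S (j + 1) a b → N.le b b' →
        ∃ a', M.le a a' ∧ S j a' b')

/-- `k`-bisimilarity of two rooted models. -/
def NBisim {n : ℕ} (M N : Model n) (k : ℕ) : Prop :=
  NBisimAt M N k M.root N.root

/-- The submodel on the rooted upset `↑z`. -/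
def up {n : ℕ} (M : Model n) (z : M.W) : Model n where
  W := {w : M.W // M.le z w}
  le a b := M.le a.1 b.1
  refl a := M.refl a.1
  trans a b c h1 h2 := M.trans a.1 b.1 c.1 h1 h2
  antisymm a b h1 h2 := Subtype.ext (M.antisymm a.1 b.1 h1 h2)
  root := ⟨z, M.refl z⟩
  rooted w := w.2
  col a := M.col a.1
  mono a b h := M.mono a.1 b.1 h

/-- `(M, x) ≤ₖ (N, y)`: there is `z ≥ x` such that `(↑z, z)` is `k`-bisimilar
with `(N, y)`. -/
def LeBisim {n : ℕ} (M N : Model n) (k : ℕ) : Prop :=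
  ∃ z : M.W, M.le M.root z ∧ NBisim (M.up z) N k

/-- Two points of a model are bisimilar. -/
def PointsBisim {n : ℕ} (M : Model n) (a b : M.W) : Prop :=
  ∃ S : M.W → M.W → Prop,
    S a b ∧
    (∀ x y, S x y → M.col x = M.col y) ∧
    (∀ x y x', S x y → M.le x x' → ∃ y', M.le y y' ∧ S x' y') ∧
    (∀ x y y', S x y → M.le y y' → ∃ x', M.le x x' ∧ S x' y')

/-- A model over `n` variables is (`n`-)generated if it contains no two
distinct bisimilar points. -/
def Generated {n : ℕ} (M : Model n) : Prop :=
  ∀ a b : M.W, M.PointsBisim a b → a = b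

/-- Isomorphism of models: a root-preserving, color-preserving order
isomorphism. -/
def Iso {n : ℕ} (M N : Model n) : Prop :=
  ∃ f : M.W → N.W, Function.Bijective f ∧ f M.root = N.root ∧
    (∀ a b, M.le a b ↔ N.le (f a) (f b)) ∧ (∀ a, N.col (f a) = M.col a)

/-- `M` is a model over the class of posets `K`: its underlying poset is a
p-morphic image of a rooted upset of a member of `K`. -/
def InClass {n : ℕ} (K : Set Frame) (M : Model n) : Prop :=
  ∃ F ∈ K, ∃ z : F.W, PMorphicImage (F.up z) M.frame

/-- The model on the rooted upset `↑z` of a frame `F`, with coloring `c`. -/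
def ofFrame (F : Frame) (z : F.W) (n : ℕ) (c : (F.up z).W → Set (Fin n))
    (hc : ∀ a b : (F.up z).W, (F.up z).le a b → c a ⊆ c b) : Model n where
  W := (F.up z).W
  le := (F.up z).le
  refl := (F.up z).refl
  trans := (F.up z).trans
  antisymm := (F.up z).antisymm
  root := ⟨z, F.refl z⟩
  rooted w := w.2
  col := c
  mono := hc

end Model

/-! ## Boolean sums and stacks -/

/-- A (finite rooted) poset is a Boolean sum: it is rooted, covers decrease the
depth by exactly one, and every point of depth `k+1` lies below every point of
depth `k`. -/
def IsBooleanSum (F : Frame) : Prop :=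
  F.Rooted ∧
  (∀ a b da db, F.covBy a b → F.depthEq a da → F.depthEq b db → da = db + 1) ∧
  (∀ a b k, F.depthEq a (k + 1) → F.depthEq b k → F.le a b)

/-- `F` contains a `k`-stack: `k` consecutive layers (sets of points of equal
depth) each containing at least two points. -/
def HasStack (F : Frame) (k : ℕ) : Prop :=
  ∃ j : ℕ, ∀ i : ℕ, j ≤ i → i < j + k →
    ∃ a b : F.W, a ≠ b ∧ F.depthEq a i ∧ F.depthEq b i

/-! ## The posets Q₁, …, Q₈ -/

def q1le : Fin 4 → Fin 4 → Bool := fun a b =>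
  a = b || a = 0 || (a = 1 && b = 3)
def q2le : Fin 5 → Fin 5 → Bool := fun a b =>
  a = b || a = 0 || (a = 1 && (b = 3 || b = 4)) || (a = 2 && b = 4)
def q3le : Fin 5 → Fin 5 → Bool := fun a b =>
  a = b || a = 0 || (a = 1 && b = 4) || (a = 2 && (b = 3 || b = 4)) ||
    (a = 3 && b = 4)
def q4le : Fin 5 → Fin 5 → Bool := fun a b =>
  a = b || a = 0 || ((a = 1 || a = 2) && (b = 3 || b = 4))
def q5le : Fin 6 → Fin 6 → Bool := fun a b =>
  a = b || a = 0 || b = 5 || ((a = 1 || a = 2) && (b = 3 || b = 4))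
def q6le : Fin 4 → Fin 4 → Bool := fun a b =>
  a = b || a = 0 || b = 3
def q7le : Fin 5 → Fin 5 → Bool := fun a b =>
  a = b || a = 0 || (a = 1 && b = 3) || (a = 2 && b = 4)
def q8le : Fin 4 → Fin 4 → Bool := fun a b =>
  a = b || a = 0

/-- `Q₁`: root `0`; immediate successors `1`, `2`; `2` maximal; `3` the unique
(maximal) immediate successor of `1`. -/
def Q1f : Frame :=
  ⟨Fin 4, fun a b => q1le a b = true, by decide, by decide, by decide⟩
/-- `Q₂`: root `0`; immediate successors `1`, `2`; maximal points `3`, `4`;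
`1 < 3`, `1 < 4`, `2 < 4`, `2 ≮ 3`. -/
def Q2f : Frame :=
  ⟨Fin 5, fun a b => q2le a b = true, by decide, by decide, by decide⟩
/-- `Q₃`: root `0`; immediate successors `1`, `2`; `3` covers `2`; top `4`
with `1 < 4` and `3 < 4`. -/
def Q3f : Frame :=
  ⟨Fin 5, fun a b => q3le a b = true, by decide, by decide, by decide⟩
/-- `Q₄`: root `0`; `1`, `2` cover the root; maximal `3`, `4` above both `1`
and `2`. -/
def Q4f : Frame :=
  ⟨Fin 5, fun a b => q4le a b = true, by decide, by decide, by decide⟩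
/-- `Q₅`: `Q₄` with a greatest element `5` added on top. -/
def Q5f : Frame :=
  ⟨Fin 6, fun a b => q5le a b = true, by decide, by decide, by decide⟩
/-- `Q₆`: the diamond. -/
def Q6f : Frame :=
  ⟨Fin 4, fun a b => q6le a b = true, by decide, by decide, by decide⟩
/-- `Q₇`: root `0`; `1 < 3`, `2 < 4`, and no other strict relations above the
root. -/
def Q7f : Frame :=
  ⟨Fin 5, fun a b => q7le a b = true, by decide, by decide, by decide⟩
/-- `Q₈`: a root with three pairwise incomparable maximal points. -/
def Q8f : Frame :=
  ⟨Fin 4, fun a b => q8le a b = true, by decide, by decide, by decide⟩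

/-! ## Particular logics -/

/-- The one-element poset. -/
def unitFrame : Frame :=
  ⟨PUnit, fun _ _ => True, fun _ => trivial, fun _ _ _ _ _ => trivial,
    fun a b _ _ => Subsingleton.elim a b⟩

/-- The two-element chain. -/
def chain2 : Frame :=
  ⟨Bool, fun a b => a ≤ b, le_refl, fun _ _ _ => le_trans,
    fun _ _ => le_antisymm⟩

/-- Classical propositional logic: the logic of the one-element poset. -/
def CPC : Set Form := FrameLog unitFrame

/-- The logic of the two-element chain. -/
def Sme : Set Form := FrameLog chain2

/-- The weak Peirce law `(q → p) ∨ (((p → q) → p) → p)`. -/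
def wPLax : Form :=
  .or (.imp (.var 1) (.var 0))
    (.imp (.imp (.imp (.var 0) (.var 1)) (.var 0)) (.var 0))

/-- The logic `wPL = IPC ⊕ (q → p) ∨ (((p → q) → p) → p)`. -/
def wPL : Set Form := oplus IPCSet {wPLax}

/-- The bounded-width-2 axiom `⋁_{i≤2} (pᵢ → ⋁_{j≠i} pⱼ)`. -/
def bw2ax : Form :=
  .or (.imp (.var 0) (.or (.var 1) (.var 2)))
    (.or (.imp (.var 1) (.or (.var 0) (.var 2)))
      (.imp (.var 2) (.or (.var 0) (.var 1))))

/-- The axiom `¬p ∨ ¬¬p`. -/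
def kcax : Form := .or (Form.neg (.var 0)) (Form.neg (Form.neg (.var 0)))

/-- The logic `Box = wPL ⊕ bw₂ ⊕ (¬p ∨ ¬¬p)`. -/
def BoxLogic : Set Form := oplus wPL {bw2ax, kcax}

/-- The bounded-depth formulas. -/
def bd : ℕ → Form
  | 0 => .var 0
  | n + 1 => .or (.var (n + 1)) (.imp (.var (n + 1)) (bd n))

/-- The logic `BD_n = IPC ⊕ bd_n`. -/
def BD (n : ℕ) : Set Form := oplus IPCSet {bd n}

/-- A logic is of finite depth if it contains some `BD_n`. -/
def FiniteDepth (L : Set Form) : Prop := ∃ n, BD n ⊆ L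

/-! ## The Rieger–Nishimura ladder -/

/-- Points of the Rieger–Nishimura ladder: `inl k = L_k`, `inr k = R_k`. -/
abbrev RNpt : Type := ℕ ⊕ ℕ

/-- The covering relation of the Rieger–Nishimura ladder (`rnCov a b` means
`a ⋖ b`, i.e. `b` is an immediate successor of `a`). -/
inductive rnCov : RNpt → RNpt → Prop
  | ll (k : ℕ) : rnCov (.inl (k + 1)) (.inl k)
  | rr (k : ℕ) : rnCov (.inr (k + 1)) (.inr k)
  | rl (k : ℕ) : rnCov (.inr (k + 1)) (.inl k)
  | lr (k : ℕ) : rnCov (.inl (k + 2)) (.inr k)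

private def rnIdx : RNpt → ℕ
  | .inl k => 2 * k
  | .inr k => 2 * k + 1

private theorem rnCov_idx {a b : RNpt} (h : rnCov a b) : rnIdx b < rnIdx a := by
  cases h <;> simp [rnIdx] <;> omega

private theorem rnLe_idx {a b : RNpt} (h : Relation.ReflTransGen rnCov a b) :
    rnIdx b ≤ rnIdx a := by
  induction h with
  | refl => exact le_rfl
  | tail _ h₂ ih => exact le_trans (le_of_lt (rnCov_idx h₂)) ih

private theorem rnIdx_inj {a b : RNpt} (h : rnIdx a = rnIdx b) : a = b := by
  rcases a with a | a <;> rcases b with b | b <;> simp [rnIdx] at h ⊢ <;> omega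

/-- The Rieger–Nishimura ladder as a poset: the order is the reflexive
transitive closure of the covering relation. -/
def RN : Frame where
  W := RNpt
  le a b := Relation.ReflTransGen rnCov a b
  refl _ := Relation.ReflTransGen.refl
  trans _ _ _ h1 h2 := h1.trans h2
  antisymm _ _ h1 h2 := rnIdx_inj (le_antisymm (rnLe_idx h2) (rnLe_idx h1))

/-! ## Combs -/

def combLe (n : ℕ) : (Fin n ⊕ Fin n) → (Fin n ⊕ Fin n) → Prop
  | .inl i, .inl j => i ≤ j
  | .inl i, .inr j => i ≤ j
  | .inr i, .inr j => i = j
  | .inr _, .inl _ => False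

/-- The `n`-comb: base points `x_1 ≤ … ≤ x_n` (encoded `inl 0, …, inl (n-1)`)
and maximal teeth `y_1, …, y_n` (encoded `inr 0, …, inr (n-1)`), with
`x_i ≤ y_j ↔ i ≤ j` and the teeth pairwise incomparable. -/
def Comb (n : ℕ) : Frame where
  W := Fin n ⊕ Fin n
  le := combLe n
  refl := by rintro (i | i) <;> simp [combLe]
  trans := by
    rintro (i | i) (j | j) (k | k) h1 h2 <;> simp only [combLe] at * <;>
      first
        | exact le_trans h1 h2
        | exact h2 ▸ h1
  antisymm := by
    rintro (i | i) (j | j) h1 h2 <;> simp only [combLe] at * <;>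
      first
        | exact congrArg Sum.inl (le_antisymm h1 h2)
        | exact congrArg Sum.inr h1

/-- A broken `m`-comb: (isomorphic to) a subposet of the `m`-comb containing
all of the base points `x_1, …, x_m`. -/
def IsBrokenComb (F : Frame) (m : ℕ) : Prop :=
  ∃ s : Set (Comb m).W, (∀ i : Fin m, Sum.inl i ∈ s) ∧
    FrameIso F ((Comb m).restrict s)

/-- The logic of the class of all combs. -/
def LFC : Set Form := LogK {F | ∃ n, F = Comb n}

/-! ## The stacked models `M_n^k` and `N_n^k` -/

/-- Height index of a point: layer `j` (from the top) has index `j`, the root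
(`none`) has index `k+1`. -/
def stackIdx (k : ℕ) : Option (Fin (k + 1) × Bool) → ℕ
  | none => k + 1
  | some (j, _) => j

/-- Size of the color (an initial segment of the variables): the left point
(`false`) of layer `j` gets `1^{n-j}0^j`, the right point (`true`) gets
`1^{n-j-1}0^{j+1}`, and the root gets `1^r0^{n-r}`. -/
def stackColSize (n k r : ℕ) : Option (Fin (k + 1) × Bool) → ℕ
  | none => r
  | some (j, false) => n - j
  | some (j, true) => n - ((j : ℕ) + 1)

private theorem stackColSize_le (n k r : ℕ) (hr : r ≤ n - (k + 1))
    {a b : Option (Fin (k + 1) × Bool)} (h : stackIdx k b < stackIdx k a) :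
    stackColSize n k r a ≤ stackColSize n k r b := by
  rcases a with _ | ⟨j, _ | _⟩ <;> rcases b with _ | ⟨j', _ | _⟩ <;>
    simp only [stackIdx, stackColSize] at * <;> omega

/-- The common shape of `M_n^k` and `N_n^k`, with root color `1^r0^{n-r}`:
`k+1` layers of two points stacked on top of a root. -/
def stackModel (n k r : ℕ) (hr : r ≤ n - (k + 1)) : Model n where
  W := Option (Fin (k + 1) × Bool)
  le a b := a = b ∨ stackIdx k b < stackIdx k a
  refl _ := Or.inl rfl
  trans := by
    rintro a b c (rfl | h1) h2
    · exact h2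
    · rcases h2 with rfl | h2
      · exact Or.inr h1
      · exact Or.inr (h2.trans h1)
  antisymm := by
    rintro a b (rfl | h1) h2
    · rfl
    · rcases h2 with rfl | h2
      · rfl
      · omega
  root := none
  rooted := by
    rintro (_ | ⟨j, s⟩)
    · exact Or.inl rfl
    · exact Or.inr j.isLt
  col a := {i : Fin n | (i : ℕ) < stackColSize n k r a}
  mono := by
    rintro a b (rfl | h) i hi
    · exact hi
    · exact lt_of_lt_of_le hi (stackColSize_le n k r hr h)

/-- The model `M_n^k` (root color `1^{n-k-1}0^{k+1}`). -/
def Mmodel (n k : ℕ) : Model n := stackModel n k (n - (k + 1)) le_rfl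

/-- The model `N_n^k` (root color `1^{n-k-2}0^{k+2}`). -/
def Nmodel (n k : ℕ) : Model n := stackModel n k (n - (k + 2)) (by omega)

/-! ## The frames `S_n` -/

/-- Height index in `S_n`: the top point (`some none`) has index `0`, the two
points of the `j`-th middle layer have index `j+1`, and the root (`none`) has
index `n`. -/
def sIdx (n : ℕ) : Option (Option (Fin (n - 1) × Bool)) → ℕ
  | none => n
  | some none => 0
  | some (some (j, _)) => (j : ℕ) + 1

/-- The frame `S_n` (for `n ≥ 2`): the Boolean sum whose layers from top to
bottom have sizes `1, 2, …, 2, 1` (with `n - 1` layers of size `2`). -/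
def SFrame (n : ℕ) : Frame where
  W := Option (Option (Fin (n - 1) × Bool))
  le a b := a = b ∨ sIdx n b < sIdx n a
  refl _ := Or.inl rfl
  trans := by
    rintro a b c (rfl | h1) h2
    · exact h2
    · rcases h2 with rfl | h2
      · exact Or.inr h1
      · exact Or.inr (h2.trans h1)
  antisymm := by
    rintro a b (rfl | h1) h2
    · rfl
    · rcases h2 with rfl | h2
      · rfl
      · omega

namespace IPCX

/-- context-implication -/
def ctx (Γ : List Form) (ψ : Form) : Form := Γ.foldr .imp ψ

def Der (Γ : List Form) (ψ : Form) : Prop := IPC (ctx Γ ψ)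

theorem compL {ψ χ : Form} (φ : Form) (h : IPC (ψ.imp χ)) :
    IPC ((φ.imp ψ).imp (φ.imp χ)) :=
  (IPC.ax2 φ ψ χ).mp _ _ ((IPC.ax1 (ψ.imp χ) φ).mp _ _ h)

theorem impTrans {φ ψ χ : Form} (h1 : IPC (φ.imp ψ)) (h2 : IPC (ψ.imp χ)) :
    IPC (φ.imp χ) := (compL φ h2).mp _ _ h1

theorem iden (φ : Form) : IPC (φ.imp φ) :=
  ((IPC.ax2 φ (φ.imp φ) φ).mp _ _ (IPC.ax1 φ (φ.imp φ))).mp _ _ (IPC.ax1 φ φ)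

theorem ctx_mp (Γ : List Form) (ψ χ : Form) :
    IPC ((ctx Γ (ψ.imp χ)).imp ((ctx Γ ψ).imp (ctx Γ χ))) := by
  induction Γ with
  | nil => exact iden _
  | cons a Γ ih =>
      -- goal : (a → ctx Γ (ψ→χ)) → ((a → ctx Γ ψ) → (a → ctx Γ χ))
      have h1 : IPC ((Form.imp a (ctx Γ (ψ.imp χ))).imp
          (Form.imp a ((ctx Γ ψ).imp (ctx Γ χ)))) := compL a ih
      have h2 : IPC ((Form.imp a ((ctx Γ ψ).imp (ctx Γ χ))).imp
          ((Form.imp a (ctx Γ ψ)).imp (Form.imp a (ctx Γ χ)))) :=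
        IPC.ax2 a (ctx Γ ψ) (ctx Γ χ)
      exact impTrans h1 h2

theorem Der.mp {Γ : List Form} {ψ χ : Form} (h1 : Der Γ (ψ.imp χ))
    (h2 : Der Γ ψ) : Der Γ χ := ((ctx_mp Γ ψ χ).mp _ _ h1).mp _ _ h2

theorem Der.ofIPC {Γ : List Form} {ψ : Form} (h : IPC ψ) : Der Γ ψ := by
  induction Γ with
  | nil => exact h
  | cons a Γ ih => exact (IPC.ax1 _ a).mp _ _ ih

theorem imp_ctx (Γ : List Form) (ψ : Form) : IPC (ψ.imp (ctx Γ ψ)) := by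
  induction Γ with
  | nil => exact iden ψ
  | cons a Γ ih => exact impTrans ih (IPC.ax1 _ a)

theorem Der.mem {Γ : List Form} {ψ : Form} (h : ψ ∈ Γ) : Der Γ ψ := by
  induction Γ with
  | nil => cases h
  | cons a Γ ih =>
      rcases List.mem_cons.1 h with rfl | h
      · exact imp_ctx Γ ψ
      · exact (IPC.ax1 _ a).mp _ _ (ih h)

theorem Der.weaken {Γ : List Form} {ψ : Form} (a : Form) (h : Der Γ ψ) :
    Der (a :: Γ) ψ := (IPC.ax1 _ a).mp _ _ h

/-- flip as closed theorem -/
theorem flipThm (φ ψ χ : Form) :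
    IPC ((φ.imp (ψ.imp χ)).imp (ψ.imp (φ.imp χ))) := by
  have h0 : Der [φ.imp (ψ.imp χ), ψ, φ] (φ.imp (ψ.imp χ)) := Der.mem (by simp)
  have h1 : Der [φ.imp (ψ.imp χ), ψ, φ] φ := Der.mem (by simp)
  have h2 : Der [φ.imp (ψ.imp χ), ψ, φ] ψ := Der.mem (by simp)
  exact (h0.mp h1).mp h2

theorem ctx_shift (Γ : List Form) (a ψ : Form) :
    IPC ((a.imp (ctx Γ ψ)).imp (ctx Γ (a.imp ψ))) := by
  induction Γ with
  | nil => exact iden _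
  | cons b Γ ih =>
      -- (a → (b → ctx Γ ψ)) → (b → ctx Γ (a→ψ))
      exact impTrans (flipThm a b (ctx Γ ψ)) (compL b ih)

theorem Der.intro {Γ : List Form} {a ψ : Form} (h : Der (a :: Γ) ψ) :
    Der Γ (a.imp ψ) := (ctx_shift Γ a ψ).mp _ _ h

theorem Der.elim {Γ : List Form} {a ψ : Form} (h : Der Γ (a.imp ψ)) :
    Der (a :: Γ) ψ := (Der.weaken a h).mp (Der.mem (by simp))

theorem Der.andI {Γ : List Form} {ψ χ : Form} (h1 : Der Γ ψ) (h2 : Der Γ χ) :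
    Der Γ (ψ.and χ) := ((Der.ofIPC (IPC.andI ψ χ)).mp h1).mp h2

theorem Der.andE1 {Γ : List Form} {ψ χ : Form} (h : Der Γ (ψ.and χ)) :
    Der Γ ψ := (Der.ofIPC (IPC.andE1 ψ χ)).mp h

theorem Der.andE2 {Γ : List Form} {ψ χ : Form} (h : Der Γ (ψ.and χ)) :
    Der Γ χ := (Der.ofIPC (IPC.andE2 ψ χ)).mp h

theorem Der.orI1 {Γ : List Form} {ψ χ : Form} (h : Der Γ ψ) :
    Der Γ (ψ.or χ) := (Der.ofIPC (IPC.orI1 ψ χ)).mp h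

theorem Der.orI2 {Γ : List Form} {ψ χ : Form} (h : Der Γ χ) :
    Der Γ (ψ.or χ) := (Der.ofIPC (IPC.orI2 ψ χ)).mp h

theorem Der.orE {Γ : List Form} {ψ χ θ : Form} (h : Der Γ (ψ.or χ))
    (h1 : Der (ψ :: Γ) θ) (h2 : Der (χ :: Γ) θ) : Der Γ θ :=
  (((Der.ofIPC (IPC.orE ψ χ θ)).mp h1.intro).mp h2.intro).mp h

theorem Der.botE {Γ : List Form} {ψ : Form} (h : Der Γ .bot) : Der Γ ψ :=
  (Der.ofIPC (IPC.botE ψ)).mp h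

/-- cut -/
theorem Der.cut {Γ Γ' : List Form} {ψ : Form}
    (hall : ∀ χ ∈ Γ, Der Γ' χ) (h : Der Γ ψ) : Der Γ' ψ := by
  induction Γ generalizing ψ with
  | nil => exact Der.ofIPC h
  | cons a Γ ih =>
      have := ih (fun χ hχ => hall χ (by simp [hχ])) (ψ := a.imp ψ) (Der.intro h)
      exact this.mp (hall a (by simp))


def conjL : List Form → Form := List.foldr .and .top
def disjL : List Form → Form := List.foldr .or .bot

theorem conj_elim {l : List Form} {ψ : Form} (h : ψ ∈ l) :
    IPC ((conjL l).imp ψ) := by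
  induction l with
  | nil => cases h
  | cons a l ih =>
      rcases List.mem_cons.1 h with rfl | h
      · exact IPC.andE1 _ _
      · exact impTrans (IPC.andE2 _ _) (ih h)

theorem Der.conjI {Γ : List Form} {l : List Form}
    (h : ∀ ψ ∈ l, Der Γ ψ) : Der Γ (conjL l) := by
  induction l with
  | nil => exact Der.ofIPC IPC.topI
  | cons a l ih =>
      exact Der.andI (h a (by simp)) (ih (fun ψ hψ => h ψ (by simp [hψ])))

theorem imp_conj {A : Form} {l : List Form}
    (h : ∀ ψ ∈ l, IPC (A.imp ψ)) : IPC (A.imp (conjL l)) := by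
  have : Der [A] (conjL l) :=
    Der.conjI (fun ψ hψ => (Der.ofIPC (h ψ hψ)).mp (Der.mem (by simp)))
  exact this

theorem disj_intro {l : List Form} {ψ : Form} (h : ψ ∈ l) :
    IPC (ψ.imp (disjL l)) := by
  induction l with
  | nil => cases h
  | cons a l ih =>
      rcases List.mem_cons.1 h with rfl | h
      · exact IPC.orI1 _ _
      · exact impTrans (ih h) (IPC.orI2 _ _)

theorem Der.weakenCtx {Γ Γ' : List Form} {ψ : Form}
    (hsub : ∀ χ ∈ Γ, χ ∈ Γ') (h : Der Γ ψ) : Der Γ' ψ :=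
  Der.cut (fun χ hχ => Der.mem (hsub χ hχ)) h

theorem Der.disjE {Γ : List Form} {l : List Form} {θ : Form}
    (h : Der Γ (disjL l)) (hb : ∀ ψ ∈ l, Der (ψ :: Γ) θ) : Der Γ θ := by
  induction l generalizing Γ with
  | nil => exact Der.botE h
  | cons a l ih =>
      refine Der.orE h (hb a (by simp)) ?_
      refine ih (Der.mem (List.mem_cons_self)) (fun ψ hψ => ?_)
      refine Der.weakenCtx (Γ := ψ :: Γ) ?_ (hb ψ (by simp [hψ]))
      intro χ hχ; rcases List.mem_cons.1 hχ with rfl | hχ <;> simp [hχ]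

theorem imp_disjE {θ : Form} {l : List Form}
    (h : ∀ ψ ∈ l, IPC (ψ.imp θ)) : IPC ((disjL l).imp θ) := by
  have : Der [disjL l] θ := by
    refine Der.disjE (Der.mem (List.mem_cons_self)) (fun ψ hψ => ?_)
    exact (Der.ofIPC (h ψ hψ)).mp (Der.mem (by simp))
  exact this

/-! M-level natural deduction -/

def MDer (M : Set Form) (Γ : List Form) (ψ : Form) : Prop := ctx Γ ψ ∈ M

section MDer

variable {M : Set Form} (hI : ∀ χ, IPC χ → χ ∈ M)
  (hMP : ∀ a b, a ∈ M → a.imp b ∈ M → b ∈ M)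

set_option linter.unusedSectionVars false
include hI hMP


theorem MDer.ofIPC {Γ : List Form} {ψ : Form} (h : IPC ψ) : MDer M Γ ψ :=
  hI _ (Der.ofIPC h)

theorem MDer.ofDer {Γ : List Form} {ψ : Form} (h : Der Γ ψ) : MDer M Γ ψ :=
  hI _ h

theorem MDer.ofM {Γ : List Form} {ψ : Form} (h : ψ ∈ M) : MDer M Γ ψ :=
  hMP _ _ h (hI _ (imp_ctx Γ ψ))

theorem MDer.mp {Γ : List Form} {ψ χ : Form} (h1 : MDer M Γ (ψ.imp χ))
    (h2 : MDer M Γ ψ) : MDer M Γ χ :=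
  hMP _ _ h2 (hMP _ _ h1 (hI _ (ctx_mp Γ ψ χ)))

theorem MDer.mem {Γ : List Form} {ψ : Form} (h : ψ ∈ Γ) : MDer M Γ ψ :=
  hI _ (Der.mem h)

theorem MDer.intro {Γ : List Form} {a ψ : Form} (h : MDer M (a :: Γ) ψ) :
    MDer M Γ (a.imp ψ) := hMP _ _ h (hI _ (ctx_shift Γ a ψ))

theorem MDer.elim {Γ : List Form} {a ψ : Form} (h : MDer M Γ (a.imp ψ)) :
    MDer M (a :: Γ) ψ := by
  have h' : MDer M (a :: Γ) (a.imp ψ) := hMP _ _ h (hI _ (IPC.ax1 _ a))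
  exact MDer.mp hI hMP h' (MDer.mem hI hMP (by simp))

theorem MDer.cut {Γ Γ' : List Form} {ψ : Form}
    (hall : ∀ χ ∈ Γ, MDer M Γ' χ) (h : MDer M Γ ψ) : MDer M Γ' ψ := by
  induction Γ generalizing ψ with
  | nil => exact MDer.ofM hI hMP h
  | cons a Γ ih =>
      have h' : MDer M Γ (a.imp ψ) := hMP _ _ h (hI _ (ctx_shift Γ a ψ))
      have := ih (fun χ hχ => hall χ (by simp [hχ])) h'
      exact MDer.mp hI hMP this (hall a (by simp))

theorem MDer.orE {Γ : List Form} {ψ χ θ : Form} (h : MDer M Γ (ψ.or χ))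
    (h1 : MDer M (ψ :: Γ) θ) (h2 : MDer M (χ :: Γ) θ) : MDer M Γ θ := by
  have o := MDer.ofIPC (M := M) hI hMP (Γ := Γ) (IPC.orE ψ χ θ)
  exact MDer.mp hI hMP (MDer.mp hI hMP (MDer.mp hI hMP o
    (MDer.intro hI hMP h1)) (MDer.intro hI hMP h2)) h

theorem MDer.disjE {Γ : List Form} {l : List Form} {θ : Form}
    (h : MDer M Γ (disjL l)) (hb : ∀ ψ ∈ l, MDer M (ψ :: Γ) θ) :
    MDer M Γ θ := by
  induction l generalizing Γ with
  | nil => exact MDer.mp hI hMP (MDer.ofIPC hI hMP (IPC.botE θ)) h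
  | cons a l ih =>
      refine MDer.orE hI hMP h (hb a (by simp)) ?_
      refine ih (MDer.mem hI hMP (List.mem_cons_self)) (fun ψ hψ => ?_)
      refine MDer.cut hI hMP (Γ := ψ :: Γ) ?_ (hb ψ (by simp [hψ]))
      intro χ hχ
      rcases List.mem_cons.1 hχ with rfl | hχ
      · exact MDer.mem hI hMP (by simp)
      · exact MDer.mem hI hMP (by simp [hχ])

theorem MDer.andI {Γ : List Form} {ψ χ : Form} (h1 : MDer M Γ ψ)
    (h2 : MDer M Γ χ) : MDer M Γ (ψ.and χ) :=
  MDer.mp hI hMP (MDer.mp hI hMP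
    (MDer.ofIPC (M := M) hI hMP (Γ := Γ) (IPC.andI ψ χ)) h1) h2

theorem MDer.andE1 {Γ : List Form} {ψ χ : Form} (h : MDer M Γ (ψ.and χ)) :
    MDer M Γ ψ :=
  MDer.mp hI hMP (MDer.ofIPC (M := M) hI hMP (Γ := Γ) (IPC.andE1 ψ χ)) h

theorem MDer.andE2 {Γ : List Form} {ψ χ : Form} (h : MDer M Γ (ψ.and χ)) :
    MDer M Γ χ :=
  MDer.mp hI hMP (MDer.ofIPC (M := M) hI hMP (Γ := Γ) (IPC.andE2 ψ χ)) h

theorem MDer.orI1 {Γ : List Form} {ψ χ : Form} (h : MDer M Γ ψ) :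
    MDer M Γ (ψ.or χ) :=
  MDer.mp hI hMP (MDer.ofIPC (M := M) hI hMP (Γ := Γ) (IPC.orI1 ψ χ)) h

theorem MDer.orI2 {Γ : List Form} {ψ χ : Form} (h : MDer M Γ χ) :
    MDer M Γ (ψ.or χ) :=
  MDer.mp hI hMP (MDer.ofIPC (M := M) hI hMP (Γ := Γ) (IPC.orI2 ψ χ)) h

theorem MDer.conjI {Γ : List Form} {l : List Form}
    (h : ∀ ψ ∈ l, MDer M Γ ψ) : MDer M Γ (conjL l) := by
  induction l with
  | nil => exact MDer.ofIPC hI hMP IPC.topI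
  | cons a l ih =>
      have hAI := MDer.ofIPC (M := M) hI hMP (Γ := Γ) (IPC.andI a (conjL l))
      exact MDer.mp hI hMP (MDer.mp hI hMP hAI (h a (by simp)))
        (ih (fun ψ hψ => h ψ (by simp [hψ])))

end MDer


def IsSILogic' (L : Set Form) : Prop :=
  (∀ χ, IPC χ → χ ∈ L) ∧
  (∀ φ ψ : Form, Form.imp φ ψ ∈ L → φ ∈ L → ψ ∈ L)

/-- `F` is an `L`-filter: contains `L`, closed under modus ponens. -/
def IsFil (L F : Set Form) : Prop :=
  L ⊆ F ∧ ∀ a b : Form, a ∈ F → a.imp b ∈ F → b ∈ F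

theorem maxfil (L : Set Form) (hSI : IsSILogic' L) (φ0 : Form) (hφ : φ0 ∉ L) :
    ∃ M : Set Form, IsFil L M ∧ φ0 ∉ M ∧
      (∀ a b : Form, (a.or b) ∈ M → a ∈ M ∨ b ∈ M) := by
  obtain ⟨hIL, hMPL⟩ := hSI
  set S : Set (Set Form) := {F | IsFil L F ∧ φ0 ∉ F} with hS
  have hLS : L ∈ S := ⟨⟨le_refl _, fun a b ha hab => hMPL a b hab ha⟩, hφ⟩
  have hch : ∀ c ⊆ S, IsChain (· ⊆ ·) c → c.Nonempty →
      ∃ ub ∈ S, ∀ s ∈ c, s ⊆ ub := by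
    intro c hc hchain hne
    refine ⟨⋃₀ c, ⟨⟨?_, ?_⟩, ?_⟩, fun s hs => Set.subset_sUnion_of_mem hs⟩
    · obtain ⟨F, hF⟩ := hne
      exact (hc hF).1.1.trans (Set.subset_sUnion_of_mem hF)
    · intro a b ha hb
      obtain ⟨F1, hF1, ha⟩ := ha
      obtain ⟨F2, hF2, hb⟩ := hb
      rcases hchain.total hF1 hF2 with h | h
      · exact ⟨F2, hF2, (hc hF2).1.2 a b (h ha) hb⟩
      · exact ⟨F1, hF1, (hc hF1).1.2 a b ha (h hb)⟩
    · rintro ⟨F, hF, hφF⟩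
      exact (hc hF).2 hφF
  obtain ⟨M, -, hMax⟩ := zorn_subset_nonempty S hch L hLS
  have hMS : M ∈ S := hMax.1
  have hIM : ∀ χ, IPC χ → χ ∈ M := fun χ h => hMS.1.1 (hIL χ h)
  have hMPM := hMS.1.2
  refine ⟨M, hMS.1, hMS.2, ?_⟩
  intro a b hab
  by_contra hcon
  push_neg at hcon
  obtain ⟨haM, hbM⟩ := hcon
  -- generated filters
  have key : ∀ x : Form, x ∉ M →
      ∃ f ∈ M, ((f.and x).imp φ0) ∈ M := by
    intro x hx
    set G : Set Form := {ψ | ∃ f ∈ M, ((f.and x).imp ψ) ∈ M} with hG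
    have hGF : IsFil L G := by
      constructor
      · intro ψ hψ
        refine ⟨Form.top, hIM _ IPC.topI, ?_⟩
        have : IPC (ψ.imp ((Form.top.and x).imp ψ)) := IPC.ax1 _ _
        exact hMPM _ _ (hMS.1.1 hψ) (hIM _ this)
      · rintro ψ χ ⟨f1, hf1, h1⟩ ⟨f2, hf2, h2⟩
        refine ⟨f1.and f2, ?_, ?_⟩
        · have : IPC (f1.imp (f2.imp (f1.and f2))) := IPC.andI _ _
          exact hMPM _ _ hf2 (hMPM _ _ hf1 (hIM _ this))
        · -- derive (((f1∧f2)∧x)→χ)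
          have hD : Der [(f1.and f2).and x, (f2.and x).imp (ψ.imp χ),
              (f1.and x).imp ψ] χ := by
            set Γ : List Form := [(f1.and f2).and x, (f2.and x).imp (ψ.imp χ),
              (f1.and x).imp ψ] with hΓ
            have hx' : Der Γ ((f1.and f2).and x) := Der.mem (by simp [hΓ])
            have hi1 : Der Γ ((f1.and x).imp ψ) := Der.mem (by simp [hΓ])
            have hi2 : Der Γ ((f2.and x).imp (ψ.imp χ)) := Der.mem (by simp [hΓ])
            have hxx := hx'.andE2
            have hf12 := hx'.andE1
            have h1' : Der Γ ψ := hi1.mp (Der.andI hf12.andE1 hxx)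
            exact (hi2.mp (Der.andI hf12.andE2 hxx)).mp h1'
          have hD1 := hD.intro.intro.intro
          exact hMPM _ _ h2 (hMPM _ _ h1 (hIM _ hD1))
    have hMG : M ⊆ G := by
      intro ψ hψ
      exact ⟨ψ, hψ, hIM _ (IPC.andE1 _ _)⟩
    have hxG : x ∈ G := by
      refine ⟨Form.top, hIM _ IPC.topI, hIM _ (IPC.andE2 _ _)⟩
    have hGne : G ≠ M := fun h => hx (h ▸ hxG)
    have hφG : φ0 ∈ G := by
      by_contra hφG
      exact hGne (subset_antisymm (hMax.2 ⟨hGF, hφG⟩ hMG) hMG)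
    obtain ⟨f, hf, hf2⟩ := hφG
    exact ⟨f, hf, hf2⟩
  obtain ⟨f1, hf1, h1⟩ := key a haM
  obtain ⟨f2, hf2, h2⟩ := key b hbM
  -- combine: ((f1∧a)→φ0) → ((f2∧b)→φ0) → (((f1∧f2)∧(a∨b))→φ0)
  have hD : Der [(f1.and f2).and (a.or b), (f2.and b).imp φ0,
      (f1.and a).imp φ0] φ0 := by
    set Γ : List Form := [(f1.and f2).and (a.or b), (f2.and b).imp φ0,
      (f1.and a).imp φ0] with hΓ
    have hx' : Der Γ ((f1.and f2).and (a.or b)) := Der.mem (by simp [hΓ])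
    refine Der.orE hx'.andE2 ?_ ?_
    · have hx'' : Der (a :: Γ) ((f1.and f2).and (a.or b)) := hx'.weaken a
      have hha : Der (a :: Γ) a := Der.mem (by simp)
      have him : Der (a :: Γ) ((f1.and a).imp φ0) := Der.mem (by simp [hΓ])
      exact him.mp (Der.andI hx''.andE1.andE1 hha)
    · have hx'' : Der (b :: Γ) ((f1.and f2).and (a.or b)) := hx'.weaken b
      have hhb : Der (b :: Γ) b := Der.mem (by simp)
      have him : Der (b :: Γ) ((f2.and b).imp φ0) := Der.mem (by simp [hΓ])
      exact him.mp (Der.andI hx''.andE1.andE2 hhb)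
  have hD1 := hD.intro.intro.intro
  have step1 := hMPM _ _ h1 (hIM _ hD1)
  have step2 := hMPM _ _ h2 step1
  have hand : (f1.and f2).and (a.or b) ∈ M := by
    have hf12 : (f1.and f2) ∈ M :=
      hMPM _ _ hf2 (hMPM _ _ hf1 (hIM _ (IPC.andI _ _)))
    exact hMPM _ _ hab (hMPM _ _ hf12 (hIM _ (IPC.andI _ _)))
  exact hMS.2 (hMPM _ _ hand step2)


open Form

noncomputable def cjF (w : Finset Form) : Form := conjL w.toList

noncomputable def djW (W : Finset (Finset Form)) : Form := disjL (W.toList.map cjF)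

theorem cj_imp_mem {w : Finset Form} {ψ : Form} (h : ψ ∈ w) :
    IPC ((cjF w).imp ψ) := conj_elim (Finset.mem_toList.2 h)

theorem imp_cj {A : Form} {w : Finset Form} (h : ∀ ψ ∈ w, IPC (A.imp ψ)) :
    IPC (A.imp (cjF w)) := imp_conj (fun ψ hψ => h ψ (Finset.mem_toList.1 hψ))

theorem cj_mono {w v : Finset Form} (h : w ⊆ v) :
    IPC ((cjF v).imp (cjF w)) := imp_cj (fun ψ hψ => cj_imp_mem (h hψ))

theorem cj_refl (w : Finset Form) : IPC ((cjF w).imp (cjF w)) := iden _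

theorem imp_djW_mem {W : Finset (Finset Form)} {v : Finset Form} (h : v ∈ W) :
    IPC ((cjF v).imp (djW W)) :=
  disj_intro (List.mem_map.2 ⟨v, Finset.mem_toList.2 h, rfl⟩)

theorem djW_elim {W : Finset (Finset Form)} {θ : Form}
    (h : ∀ v ∈ W, IPC ((cjF v).imp θ)) : IPC ((djW W).imp θ) := by
  refine imp_disjE (fun ψ hψ => ?_)
  obtain ⟨v, hv, rfl⟩ := List.mem_map.1 hψ
  exact h v (Finset.mem_toList.1 hv)

theorem djW_mono {W1 W2 : Finset (Finset Form)} (h : W1 ⊆ W2) :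
    IPC ((djW W1).imp (djW W2)) :=
  djW_elim (fun v hv => imp_djW_mem (h hv))

theorem impTransThm (a b c : Form) :
    IPC ((a.imp b).imp ((b.imp c).imp (a.imp c))) := by
  have h : Der [a.imp b, b.imp c, a] c :=
    (Der.mem (by simp)).mp ((Der.mem (by simp : a.imp b ∈ _)).mp
      (Der.mem (by simp)))
  exact h

section Duality

variable {M : Set Form} (hI : ∀ χ, IPC χ → χ ∈ M)
  (hMP : ∀ a b : Form, a ∈ M → a.imp b ∈ M → b ∈ M)

set_option linter.unusedSectionVars false

include hI hMP

/-- `A ⊢_M B` -/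
theorem mle_trans {a b c : Form} (h1 : a.imp b ∈ M) (h2 : b.imp c ∈ M) :
    a.imp c ∈ M := hMP _ _ h2 (hMP _ _ h1 (hI _ (impTransThm a b c)))

theorem mle_of_IPC {a b : Form} (h : IPC (a.imp b)) : a.imp b ∈ M := hI _ h

variable (S : Finset Form)

/-- join-irreducible sets over `S` with respect to `M` -/
def JI (M : Set Form) (S : Finset Form) (w : Finset Form) : Prop :=
  w ⊆ S ∧ ((cjF w).imp .bot) ∉ M ∧
  ∀ W : Finset (Finset Form), (∀ v ∈ W, v ⊆ S) →
    ((cjF w).imp (djW W)) ∈ M → ∃ v ∈ W, ((cjF w).imp (cjF v)) ∈ M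

omit hI hMP in
theorem JI.subS {w : Finset Form} (h : JI M S w) : w ⊆ S := h.1

/-- decomposition into join-irreducibles -/
theorem decomp : ∀ w : Finset Form, w ⊆ S →
    ∃ V : Finset (Finset Form),
      (∀ v ∈ V, JI M S v ∧ ((cjF v).imp (cjF w)) ∈ M) ∧
      ((cjF w).imp (djW V)) ∈ M := by
  have hmeas : ∀ n : ℕ, ∀ w : Finset Form, w ⊆ S → S.card - w.card ≤ n →
      ∃ V : Finset (Finset Form),
        (∀ v ∈ V, JI M S v ∧ ((cjF v).imp (cjF w)) ∈ M) ∧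
        ((cjF w).imp (djW V)) ∈ M := by
    intro n
    induction n with
    | zero =>
        intro w hwS hc
        -- w = S
        have hw : S ⊆ w := by
          have : w = S := Finset.eq_of_subset_of_card_le hwS (by omega)
          rw [this]
        by_cases hcon : ((cjF w).imp .bot) ∈ M
        · refine ⟨∅, by simp, ?_⟩
          have : djW (∅ : Finset (Finset Form)) = Form.bot := by
            simp [djW, disjL]
          rw [this]; exact hcon
        · -- w = S is JI : any witness v ⊆ S = w has cjF w → cjF v
          have hJIw : JI M S w := by
            refine ⟨hwS, hcon, ?_⟩
            intro W hWS' hWimp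
            by_cases hne : W.Nonempty
            · obtain ⟨v, hv⟩ := hne
              exact ⟨v, hv, hI _ (cj_mono ((hWS' v hv).trans hw))⟩
            · rw [Finset.not_nonempty_iff_eq_empty] at hne
              subst hne
              have : djW (∅ : Finset (Finset Form)) = Form.bot := by
                simp [djW, disjL]
              rw [this] at hWimp
              exact absurd hWimp hcon
          refine ⟨{w}, ?_, ?_⟩
          · intro v hv
            rw [Finset.mem_singleton.1 hv]
            exact ⟨hJIw, hI _ (cj_refl w)⟩
          · exact hI _ (imp_djW_mem (Finset.mem_singleton_self w))
    | succ n ih =>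
        intro w hwS hc
        by_cases hcon : ((cjF w).imp .bot) ∈ M
        · refine ⟨∅, by simp, ?_⟩
          have : djW (∅ : Finset (Finset Form)) = Form.bot := by
            simp [djW, disjL]
          rw [this]; exact hcon
        by_cases hJI : JI M S w
        · refine ⟨{w}, ?_, hI _ (imp_djW_mem (Finset.mem_singleton_self w))⟩
          intro v hv
          rw [Finset.mem_singleton.1 hv]
          exact ⟨hJI, hI _ (cj_refl w)⟩
        · -- not JI : get witness family
          rw [JI] at hJI
          push_neg at hJI
          obtain ⟨W, hWS, hWimp, hWno⟩ := hJI hwS hcon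
          have hrec : ∀ v : {v // v ∈ W},
              ∃ V : Finset (Finset Form),
                (∀ u ∈ V, JI M S u ∧ ((cjF u).imp (cjF (w ∪ v.1))) ∈ M) ∧
                ((cjF (w ∪ v.1)).imp (djW V)) ∈ M := by
            rintro ⟨v, hv⟩
            have hsub : w ∪ v ⊆ S := Finset.union_subset hwS (hWS v hv)
            have hvnw : ¬ v ⊆ w := by
              intro hvw
              exact hWno v hv (hI _ (cj_mono hvw))
            have hcard : w.card < (w ∪ v).card := by
              obtain ⟨x, hxv, hxw⟩ := Finset.not_subset.1 hvnw
              refine Finset.card_lt_card ?_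
              refine Finset.ssubset_iff_of_subset Finset.subset_union_left
                |>.2 ⟨x, Finset.mem_union_right _ hxv, hxw⟩
            refine ih (w ∪ v) hsub ?_
            have := Finset.card_le_card hsub
            omega
          choose Vf hVf1 hVf2 using hrec
          refine ⟨W.attach.biUnion Vf, ?_, ?_⟩
          · intro u hu
            obtain ⟨v, -, hu⟩ := Finset.mem_biUnion.1 hu
            refine ⟨(hVf1 v u hu).1, ?_⟩
            exact mle_trans hI hMP (hVf1 v u hu).2
              (hI _ (cj_mono Finset.subset_union_left))
          · -- (cjF w) → djW (biUnion)
            have hstep : ∀ v ∈ W,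
                ((cjF v).and (cjF w)).imp (djW (W.attach.biUnion Vf)) ∈ M := by
              intro v hv
              have h1 : IPC (((cjF v).and (cjF w)).imp (cjF (w ∪ v))) := by
                refine imp_cj (fun ψ hψ => ?_)
                rcases Finset.mem_union.1 hψ with h | h
                · exact impTrans (IPC.andE2 _ _) (cj_imp_mem h)
                · exact impTrans (IPC.andE1 _ _) (cj_imp_mem h)
              have h2 := hVf2 ⟨v, hv⟩
              have h3 : IPC ((djW (Vf ⟨v, hv⟩)).imp
                  (djW (W.attach.biUnion Vf))) := by
                refine djW_mono (fun u hu => ?_)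
                exact Finset.mem_biUnion.2 ⟨⟨v, hv⟩, Finset.mem_attach _ _, hu⟩
              exact mle_trans hI hMP (mle_trans hI hMP (hI _ h1) h2) (hI _ h3)
            -- now disjE over W from hWimp
            have hD : MDer M [cjF w] (djW (W.attach.biUnion Vf)) := by
              have h0 : MDer M [cjF w] (djW W) :=
                MDer.mp hI hMP (MDer.ofM hI hMP hWimp)
                  (MDer.mem hI hMP (by simp))
              refine MDer.disjE hI hMP h0 (fun ψ hψ => ?_)
              obtain ⟨v, hvl, rfl⟩ := List.mem_map.1 hψ
              have hv := Finset.mem_toList.1 hvl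
              have hand : MDer M [cjF v, cjF w] ((cjF v).and (cjF w)) :=
                MDer.andI hI hMP (MDer.mem hI hMP (by simp))
                  (MDer.mem hI hMP (by simp))
              exact MDer.mp hI hMP (MDer.ofM hI hMP (hstep v hv)) hand
            exact hD
  intro w hwS
  exact hmeas (S.card - w.card) w hwS le_rfl
end Duality


open Form

section Frame0

variable {M : Set Form} {S : Finset Form}
  (hI : ∀ χ, IPC χ → χ ∈ M)
  (hMP : ∀ a b : Form, a ∈ M → a.imp b ∈ M → b ∈ M)

set_option linter.unusedSectionVars false

/-- `v` is below `w` (w stronger) -/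
def geM (M : Set Form) (v w : Finset Form) : Prop :=
  ((cjF w).imp (cjF v)) ∈ M

def JIpt (M : Set Form) (S : Finset Form) : Type :=
  {w : Finset Form // JI M S w}

include hI hMP

theorem geM_refl (v : Finset Form) : geM M v v := hI _ (cj_refl v)

theorem geM_trans {u v w : Finset Form} (h1 : geM M u v) (h2 : geM M v w) :
    geM M u w := mle_trans hI hMP h2 h1

def jiSetoid : Setoid (JIpt M S) where
  r v w := geM M v.1 w.1 ∧ geM M w.1 v.1
  iseqv := by
    refine ⟨fun v => ⟨geM_refl hI hMP _, geM_refl hI hMP _⟩,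
      fun h => ⟨h.2, h.1⟩, fun h1 h2 => ?_⟩
    exact ⟨geM_trans hI hMP h1.1 h2.1, geM_trans hI hMP h2.2 h1.2⟩

def F0 : Frame where
  W := Quotient (jiSetoid (M := M) (S := S) hI hMP)
  le := Quotient.lift₂ (fun v w => geM M v.1 w.1)
    (by
      intro a b a' b' ha hb
      obtain ⟨ha1, ha2⟩ := ha
      obtain ⟨hb1, hb2⟩ := hb
      refine propext ⟨fun h => ?_, fun h => ?_⟩
      · exact geM_trans hI hMP ha2 (geM_trans hI hMP h hb1)
      · exact geM_trans hI hMP ha1 (geM_trans hI hMP h hb2))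
  refl := by
    rintro ⟨x⟩
    exact geM_refl hI hMP _
  trans := by
    rintro ⟨x⟩ ⟨y⟩ ⟨z⟩ h1 h2
    exact geM_trans hI hMP h1 h2
  antisymm := by
    rintro ⟨x⟩ ⟨y⟩ h1 h2
    exact Quotient.sound ⟨h1, h2⟩

theorem F0_le {v w : JIpt M S} :
    (F0 hI hMP).le (Quotient.mk _ v) (Quotient.mk _ w) ↔ geM M v.1 w.1 :=
  Iff.rfl

/-- canonical valuation -/
def V0 : ℕ → (F0 (M := M) (S := S) hI hMP).W → Prop := fun p =>
  Quotient.lift (fun w : JIpt M S => ((cjF w.1).imp (.var p)) ∈ M)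
    (by
      intro a b hab
      obtain ⟨h1, h2⟩ := hab
      exact propext ⟨fun h => mle_trans hI hMP h1 h, fun h => mle_trans hI hMP h2 h⟩)

theorem V0_persistent : (F0 (M := M) (S := S) hI hMP).Persistent (V0 hI hMP) := by
  rintro p ⟨a⟩ ⟨b⟩ hle hV
  exact mle_trans hI hMP hle hV

end Frame0


open Form

theorem impAnd (x a b : Form) :
    IPC ((x.imp a).imp ((x.imp b).imp (x.imp (a.and b)))) := by
  have h : Der [x.imp a, x.imp b, x] (a.and b) := by
    have hx : Der [x.imp a, x.imp b, x] x := Der.mem (by simp)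
    exact Der.andI ((Der.mem (by simp : x.imp a ∈ _)).mp hx)
      ((Der.mem (by simp : x.imp b ∈ _)).mp hx)
  exact h

section Truth

variable {M : Set Form} {S : Finset Form}
  (hI : ∀ χ, IPC χ → χ ∈ M)
  (hMP : ∀ a b : Form, a ∈ M → a.imp b ∈ M → b ∈ M)

set_option linter.unusedSectionVars false
include hI hMP

theorem djW_elimM {W : Finset (Finset Form)} {θ : Form}
    (h : ∀ v ∈ W, ((cjF v).imp θ) ∈ M) : ((djW W).imp θ) ∈ M := by
  have hD : MDer M [djW W] θ := by
    refine MDer.disjE hI hMP (MDer.mem hI hMP (List.mem_cons_self)) (fun ψ hψ => ?_)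
    obtain ⟨v, hvl, rfl⟩ := List.mem_map.1 hψ
    exact MDer.mp hI hMP (MDer.ofM hI hMP (h v (Finset.mem_toList.1 hvl)))
      (MDer.mem hI hMP (by simp))
  exact hD

theorem conj_insertM {a : Form} {w : Finset Form} {Γ : List Form}
    (ha : a ∈ Γ) (hw : cjF w ∈ Γ) : MDer M Γ (cjF (insert a w)) := by
  refine MDer.conjI hI hMP (fun ψ hψ => ?_)
  rcases Finset.mem_insert.1 (Finset.mem_toList.1 hψ) with rfl | h
  · exact MDer.mem hI hMP ha
  · exact MDer.mp hI hMP (MDer.ofIPC hI hMP (cj_imp_mem h)) (MDer.mem hI hMP hw)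

theorem curryM {a b : Form} {w : Finset Form}
    (h : ((cjF (insert a w)).imp b) ∈ M) : ((cjF w).imp (a.imp b)) ∈ M := by
  have hD : MDer M [a, cjF w] b :=
    MDer.mp hI hMP (MDer.ofM hI hMP h)
      (conj_insertM hI hMP (by simp) (by simp))
  exact (MDer.intro hI hMP (MDer.intro hI hMP hD))

theorem truth
    (hSc : ∀ a b : Form, ((a.and b ∈ S → a ∈ S ∧ b ∈ S) ∧
      (a.or b ∈ S → a ∈ S ∧ b ∈ S) ∧ (a.imp b ∈ S → a ∈ S ∧ b ∈ S))) :
    ∀ ψ : Form, ψ ∈ S → ∀ w : JIpt M S,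
      ((F0 (M := M) (S := S) hI hMP).force (V0 hI hMP) ψ
        (Quotient.mk _ w) ↔ ((cjF w.1).imp ψ) ∈ M) := by
  intro ψ
  induction ψ with
  | var p => intro _ w; exact Iff.rfl
  | bot =>
      intro _ w
      simp only [Frame.force]
      exact ⟨fun h => h.elim, fun h => w.2.2.1 h⟩
  | top =>
      intro _ w
      simp only [Frame.force]
      refine ⟨fun _ => hI _ ((IPC.ax1 .top (cjF w.1)).mp _ _ IPC.topI),
        fun _ => trivial⟩
  | and a b iha ihb =>
      intro hmem w
      obtain ⟨haS, hbS⟩ := (hSc a b).1 hmem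
      simp only [Frame.force]
      rw [iha haS w, ihb hbS w]
      constructor
      · rintro ⟨h1, h2⟩
        exact hMP _ _ h2 (hMP _ _ h1 (hI _ (impAnd (cjF w.1) a b)))
      · intro h
        exact ⟨mle_trans hI hMP h (hI _ (IPC.andE1 a b)),
          mle_trans hI hMP h (hI _ (IPC.andE2 a b))⟩
  | or a b iha ihb =>
      intro hmem w
      obtain ⟨haS, hbS⟩ := (hSc a b).2.1 hmem
      simp only [Frame.force]
      rw [iha haS w, ihb hbS w]
      constructor
      · rintro (h | h)
        · exact mle_trans hI hMP h (hI _ (IPC.orI1 a b))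
        · exact mle_trans hI hMP h (hI _ (IPC.orI2 a b))
      · intro h
        -- use primality
        set W : Finset (Finset Form) := {{a}, {b}} with hW
        have hWS : ∀ v ∈ W, v ⊆ S := by
          intro v hv
          rcases Finset.mem_insert.1 hv with rfl | hv
          · simpa using haS
          · rw [Finset.mem_singleton.1 hv]; simpa using hbS
        have hwd : ((cjF w.1).imp (djW W)) ∈ M := by
          have hD : MDer M [cjF w.1] (djW W) := by
            refine MDer.orE hI hMP
              (MDer.mp hI hMP (MDer.ofM hI hMP h) (MDer.mem hI hMP (by simp)))
              ?_ ?_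
            · have h1 : IPC (a.imp (cjF {a})) :=
                imp_cj (fun ψ hψ => by
                  rw [Finset.mem_singleton.1 hψ]; exact iden a)
              have h2 : IPC ((cjF {a}).imp (djW W)) :=
                imp_djW_mem (by simp [hW])
              exact MDer.mp hI hMP (MDer.ofIPC hI hMP (impTrans h1 h2))
                (MDer.mem hI hMP (by simp))
            · have h1 : IPC (b.imp (cjF {b})) :=
                imp_cj (fun ψ hψ => by
                  rw [Finset.mem_singleton.1 hψ]; exact iden b)
              have h2 : IPC ((cjF {b}).imp (djW W)) :=
                imp_djW_mem (by simp [hW])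
              exact MDer.mp hI hMP (MDer.ofIPC hI hMP (impTrans h1 h2))
                (MDer.mem hI hMP (by simp))
          exact hD
        obtain ⟨v, hvW, hv⟩ := w.2.2.2 W hWS hwd
        rcases Finset.mem_insert.1 hvW with rfl | hvW
        · left; exact mle_trans hI hMP hv (hI _ (cj_imp_mem (by simp)))
        · right
          rw [Finset.mem_singleton.1 hvW] at hv
          exact mle_trans hI hMP hv (hI _ (cj_imp_mem (by simp)))
  | imp a b iha ihb =>
      intro hmem w
      obtain ⟨haS, hbS⟩ := (hSc a b).2.2 hmem
      constructor
      · intro hforce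
        by_contra hcon
        have huS : insert a w.1 ⊆ S := Finset.insert_subset haS w.2.1
        obtain ⟨V, hV1, hV2⟩ := decomp hI hMP S (insert a w.1) huS
        have hex : ∃ v ∈ V, ((cjF v).imp b) ∉ M := by
          by_contra hall
          push_neg at hall
          have : ((cjF (insert a w.1)).imp b) ∈ M :=
            mle_trans hI hMP hV2 (djW_elimM hI hMP hall)
          exact hcon (curryM hI hMP this)
        obtain ⟨v, hvV, hvb⟩ := hex
        have hvw : geM M w.1 v :=
          mle_trans hI hMP (hV1 v hvV).2
            (hI _ (cj_mono (Finset.subset_insert a w.1)))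
        have hva : ((cjF v).imp a) ∈ M :=
          mle_trans hI hMP (hV1 v hvV).2 (hI _ (cj_imp_mem (by simp)))
        set vpt : JIpt M S := ⟨v, (hV1 v hvV).1⟩ with hvpt
        have hle : (F0 (M := M) (S := S) hI hMP).le (Quotient.mk _ w)
            (Quotient.mk _ vpt) := hvw
        have := hforce _ hle ((iha haS vpt).2 hva)
        exact hvb ((ihb hbS vpt).1 this)
      · intro h
        rintro ⟨v⟩ hle hfa
        have hva : ((cjF v.1).imp a) ∈ M := (iha haS v).1 hfa
        have hvab : ((cjF v.1).imp (a.imp b)) ∈ M :=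
          mle_trans hI hMP hle h
        have hvb : ((cjF v.1).imp b) ∈ M := by
          have := hMP _ _ hvab (hI _ (IPC.ax2 (cjF v.1) a b))
          exact hMP _ _ hva this
        exact (ihb hbS v).2 hvb

end Truth

end IPCX
section Depth

namespace Frame

variable (F : Frame)

theorem lt_trans' {a b c : F.W} (h1 : F.lt a b) (h2 : F.lt b c) : F.lt a c := by
  refine ⟨F.trans _ _ _ h1.1 h2.1, fun hac => ?_⟩
  subst hac
  exact h1.2 (F.antisymm _ _ h1.1 h2.1)

theorem hasChainUp_one (w : F.W) : F.hasChainUp w 1 := by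
  refine ⟨fun _ => w, fun i _ => rfl, fun i j hij => ?_⟩
  omega

theorem chain_le_card [Finite F.W] {w : F.W} {d : ℕ} (h : F.hasChainUp w d) :
    d ≤ Nat.card F.W := by
  obtain ⟨f, hf0, hmono⟩ := h
  have hinj : Function.Injective f := by
    intro i j hij
    by_contra hne
    rcases lt_or_gt_of_ne (fun h : (i : ℕ) = (j : ℕ) => hne (Fin.ext h)) with h | h
    · exact (hmono i j h).2 hij
    · exact (hmono j i h).2 hij.symm
  calc d = Nat.card (Fin d) := by simp
  _ ≤ Nat.card F.W := Nat.card_le_card_of_injective f hinj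

noncomputable def dep [Finite F.W] (w : F.W) : ℕ :=
  @Nat.findGreatest (F.hasChainUp w) (Classical.decPred _) (Nat.card F.W)

variable [Finite F.W]

theorem dep_spec (w : F.W) : F.hasChainUp w (F.dep w) :=
  @Nat.findGreatest_spec 1 (F.hasChainUp w) (Classical.decPred _) _
    (F.chain_le_card (F.hasChainUp_one w)) (F.hasChainUp_one w)

theorem dep_max {w : F.W} {d : ℕ} (h : F.hasChainUp w d) : d ≤ F.dep w :=
  @Nat.le_findGreatest _ _ (Classical.decPred _) _ (F.chain_le_card h) h

theorem dep_pos (w : F.W) : 1 ≤ F.dep w := F.dep_max (F.hasChainUp_one w)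

theorem depthEq_dep (w : F.W) : F.depthEq w (F.dep w) := by
  refine ⟨F.dep_spec w, fun h => ?_⟩
  have := F.dep_max h
  omega

theorem depthEq_unique {w : F.W} {d : ℕ} (h : F.depthEq w d) : d = F.dep w := by
  have h1 := F.dep_max h.1
  rcases lt_or_eq_of_le h1 with h2 | h2
  · exfalso
    obtain ⟨f, hf0, hmono⟩ := F.dep_spec w
    -- truncate chain of length dep w to length d+1
    refine h.2 ⟨fun i => f ⟨i, by omega⟩, fun i hi => ?_, fun i j hij => ?_⟩
    · have := hf0 ⟨i, by omega⟩ (by simpa using hi)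
      simpa using this
    · exact hmono _ _ (by simpa using hij)
  · exact h2

omit [Finite F.W] in
theorem chain_cons {a b : F.W} {d : ℕ} (hab : F.lt a b)
    (h : F.hasChainUp b d) : F.hasChainUp a (d + 1) := by
  obtain ⟨f, hf0, hmono⟩ := h
  by_cases hd : d = 0
  · subst hd
    exact ⟨fun _ => a, fun _ _ => rfl, fun i j hij => by omega⟩
  refine ⟨fun i => if h : (i : ℕ) = 0 then a else f ⟨(i : ℕ) - 1, by omega⟩,
    fun i hi => by simp [hi], fun i j hij => ?_⟩
  have hj : ¬ (j : ℕ) = 0 := by omega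
  simp only [hj, dif_neg, not_false_iff]
  by_cases hi : (i : ℕ) = 0
  · simp only [hi, dif_pos]
    by_cases hj1 : (j : ℕ) - 1 = 0
    · have : f ⟨(j : ℕ) - 1, by omega⟩ = b := hf0 _ hj1
      rw [this]; exact hab
    · have hb : f ⟨0, by omega⟩ = b := hf0 _ rfl
      have hstep := hmono ⟨0, by omega⟩ ⟨(j : ℕ) - 1, by omega⟩
        (show (0:ℕ) < (j:ℕ) - 1 by omega)
      rw [hb] at hstep
      exact F.lt_trans' hab hstep
  · simp only [hi, dif_neg, not_false_iff]
    exact hmono ⟨(i : ℕ) - 1, by omega⟩ ⟨(j : ℕ) - 1, by omega⟩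
      (show (i:ℕ) - 1 < (j:ℕ) - 1 by omega)

theorem dep_lt_of_lt {a b : F.W} (h : F.lt a b) : F.dep b < F.dep a := by
  have := F.dep_max (F.chain_cons h (F.dep_spec b))
  omega

theorem exists_dep_pred {w : F.W} (h : 2 ≤ F.dep w) :
    ∃ v : F.W, F.lt w v ∧ F.dep v = F.dep w - 1 := by
  obtain ⟨f, hf0, hmono⟩ := F.dep_spec w
  have hlt : F.lt w (f ⟨1, by omega⟩) := by
    have h0 : f ⟨0, by omega⟩ = w := hf0 _ rfl
    have := hmono ⟨0, by omega⟩ ⟨1, by omega⟩ (show (0:ℕ) < 1 by omega)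
    rwa [h0] at this
  refine ⟨f ⟨1, by omega⟩, hlt, ?_⟩
  have hup : F.hasChainUp (f ⟨1, by omega⟩) (F.dep w - 1) := by
    refine ⟨fun i => f ⟨(i : ℕ) + 1, by omega⟩, fun i hi => ?_, fun i j hij => ?_⟩
    · have : (i : ℕ) + 1 = 1 := by omega
      simp only [this]
    · exact hmono ⟨(i : ℕ) + 1, by omega⟩ ⟨(j : ℕ) + 1, by omega⟩
        (show (i:ℕ) + 1 < (j:ℕ) + 1 by omega)
  have h1 := F.dep_max hup
  have h2 := F.dep_lt_of_lt hlt
  omega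

theorem exists_dep_between {w : F.W} {j : ℕ} (h1 : 1 ≤ j) (h2 : j ≤ F.dep w) :
    ∃ v : F.W, F.le w v ∧ F.dep v = j := by
  have : ∀ n : ℕ, ∀ w : F.W, F.dep w - j ≤ n → j ≤ F.dep w →
      ∃ v : F.W, F.le w v ∧ F.dep v = j := by
    intro n
    induction n with
    | zero =>
        intro w hn hj
        exact ⟨w, F.refl w, by omega⟩
    | succ n ih =>
        intro w hn hj
        by_cases heq : F.dep w = j
        · exact ⟨w, F.refl w, heq⟩
        · have h2' : 2 ≤ F.dep w := by omega
          obtain ⟨v, hv, hvd⟩ := F.exists_dep_pred h2'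
          obtain ⟨u, hu, hud⟩ := ih v (by omega) (by omega)
          exact ⟨u, F.trans _ _ _ hv.1 hu, hud⟩
  exact this (F.dep w - j) w le_rfl h2

theorem dep_le_of_le {a b : F.W} (h : F.le a b) : F.dep b ≤ F.dep a := by
  by_cases he : a = b
  · subst he; exact le_rfl
  · exact le_of_lt (F.dep_lt_of_lt ⟨h, he⟩)

/-- two points of equal depth are equal or incomparable -/
theorem eq_of_le_dep {a b : F.W} (h : F.le a b) (hd : F.dep a ≤ F.dep b) :
    a = b := by
  by_contra hne
  have := F.dep_lt_of_lt ⟨h, hne⟩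
  omega

end Frame

end Depth
namespace IPCX

open Form

section Facts

variable {M : Set Form} {S : Finset Form}
  (hI : ∀ χ, IPC χ → χ ∈ M)
  (hMP : ∀ a b : Form, a ∈ M → a.imp b ∈ M → b ∈ M)
  (hDP : ∀ a b : Form, (a.or b) ∈ M → a ∈ M ∨ b ∈ M)
  (hbot : Form.bot ∉ M)

set_option linter.unusedSectionVars false
include hI hMP

theorem cjF_empty : cjF (∅ : Finset Form) = Form.top := by
  simp [cjF, conjL]

theorem finite_JIpt : Finite (JIpt M S) := by
  refine Finite.of_injective
    (fun w => (⟨w.1, Finset.mem_powerset.2 w.2.1⟩ : {x // x ∈ S.powerset}))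
    ?_
  intro a b h
  simp only [Subtype.mk.injEq] at h
  exact Subtype.ext h

instance : Finite ((F0 (M := M) (S := S) hI hMP).W) := by
  have := finite_JIpt (M := M) (S := S) hI hMP
  exact Quotient.finite _

include hDP hbot

theorem disjL_DP {l : List Form} (h : disjL l ∈ M) : ∃ ψ ∈ l, ψ ∈ M := by
  induction l with
  | nil => exact absurd h hbot
  | cons a l ih =>
      rcases hDP _ _ h with h | h
      · exact ⟨a, by simp, h⟩
      · obtain ⟨ψ, hψ, hm⟩ := ih h
        exact ⟨ψ, by simp [hψ], hm⟩

theorem JI_empty : JI M S (∅ : Finset Form) := by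
  refine ⟨Finset.empty_subset S, ?_, ?_⟩
  · rw [cjF_empty hI hMP]
    intro h
    exact hbot (hMP _ _ (hI _ IPC.topI) h)
  · intro W hWS h
    rw [cjF_empty hI hMP] at h
    have hd : djW W ∈ M := hMP _ _ (hI _ IPC.topI) h
    obtain ⟨ψ, hψl, hm⟩ := disjL_DP hI hMP hDP hbot hd
    obtain ⟨v, hvl, rfl⟩ := List.mem_map.1 hψl
    refine ⟨v, Finset.mem_toList.1 hvl, ?_⟩
    rw [cjF_empty hI hMP]
    exact hMP _ _ hm (hI _ (IPC.ax1 _ _))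

/-- the root of F0 -/
noncomputable def rt : (F0 (M := M) (S := S) hI hMP).W :=
  Quotient.mk _ (⟨∅, JI_empty hI hMP hDP hbot⟩ : JIpt M S)

theorem rt_root : ∀ w, (F0 (M := M) (S := S) hI hMP).le
    (rt hI hMP hDP hbot) w := by
  rintro ⟨w⟩
  show geM M ∅ w.1
  unfold geM
  rw [cjF_empty hI hMP]
  exact hI _ ((IPC.ax1 Form.top (cjF w.1)).mp _ _ IPC.topI)

theorem F0_rooted : (F0 (M := M) (S := S) hI hMP).Rooted :=
  ⟨rt hI hMP hDP hbot, rt_root hI hMP hDP hbot⟩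

theorem F0_refutes {φ0 : Form} (hφS : φ0 ∈ S) (hφM : φ0 ∉ M)
    (hSc : ∀ a b : Form, ((a.and b ∈ S → a ∈ S ∧ b ∈ S) ∧
      (a.or b ∈ S → a ∈ S ∧ b ∈ S) ∧ (a.imp b ∈ S → a ∈ S ∧ b ∈ S))) :
    ¬ (F0 (M := M) (S := S) hI hMP).Valid φ0 := by
  intro hval
  have := hval (V0 hI hMP) (V0_persistent hI hMP) (rt hI hMP hDP hbot)
  have h2 := (truth hI hMP hSc φ0 hφS ⟨∅, JI_empty hI hMP hDP hbot⟩).1 this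
  rw [cjF_empty hI hMP] at h2
  exact hφM (hMP _ _ (hI _ IPC.topI) h2)

omit hDP hbot in
/-- primality over a binary disjunction of conjunctions -/
theorem primOr {w u v : Finset Form} (hw : JI M S w) (hu : u ⊆ S) (hv : v ⊆ S)
    (h : ((cjF w).imp ((cjF u).or (cjF v))) ∈ M) :
    ((cjF w).imp (cjF u)) ∈ M ∨ ((cjF w).imp (cjF v)) ∈ M := by
  set W : Finset (Finset Form) := {u, v} with hWdef
  have hWS : ∀ x ∈ W, x ⊆ S := by
    intro x hx
    rcases Finset.mem_insert.1 hx with rfl | hx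
    · exact hu
    · rw [Finset.mem_singleton.1 hx]; exact hv
  have hwd : ((cjF w).imp (djW W)) ∈ M := by
    have hD : MDer M [cjF w] (djW W) := by
      refine MDer.orE hI hMP
        (MDer.mp hI hMP (MDer.ofM hI hMP h)
          (MDer.mem hI hMP (List.mem_cons_self))) ?_ ?_
      · exact MDer.mp hI hMP
          (MDer.ofIPC hI hMP (imp_djW_mem (Finset.mem_insert_self u {v})))
          (MDer.mem hI hMP (List.mem_cons_self))
      · exact MDer.mp hI hMP
          (MDer.ofIPC hI hMP (imp_djW_mem
            (Finset.mem_insert.2 (Or.inr (Finset.mem_singleton_self v)))))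
          (MDer.mem hI hMP (List.mem_cons_self))
    exact hD
  obtain ⟨x, hxW, hx⟩ := hw.2.2 W hWS hwd
  rcases Finset.mem_insert.1 hxW with rfl | hxW
  · exact Or.inl hx
  · rw [Finset.mem_singleton.1 hxW] at hx
    exact Or.inr hx

omit hDP hbot in
theorem F0_width (hB : ∀ p0 p1 p2 : Form,
    ((p0.imp (p1.or p2)).or ((p1.imp (p0.or p2)).or (p2.imp (p0.or p1)))) ∈ M)
    (hDP : ∀ a b : Form, (a.or b) ∈ M → a ∈ M ∨ b ∈ M) :
    ∀ x y z : (F0 (M := M) (S := S) hI hMP).W,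
      (¬ (F0 hI hMP).le x y) → (¬ (F0 hI hMP).le y x) →
      (¬ (F0 hI hMP).le x z) → (¬ (F0 hI hMP).le z x) →
      (¬ (F0 hI hMP).le y z) → (¬ (F0 hI hMP).le z y) → False := by
  rintro ⟨x⟩ ⟨y⟩ ⟨z⟩ hxy hyx hxz hzx hyz hzy
  -- le ⟦x⟧ ⟦y⟧ = geM x.1 y.1 = (cjF y → cjF x) ∈ M
  have hinst := hB (cjF x.1) (cjF y.1) (cjF z.1)
  rcases hDP _ _ hinst with h | h
  · rcases primOr hI hMP x.2 y.2.1 z.2.1 h with h | h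
    · exact hyx h
    · exact hzx h
  rcases hDP _ _ h with h | h
  · rcases primOr hI hMP y.2 x.2.1 z.2.1 h with h | h
    · exact hxy h
    · exact hzy h
  · rcases primOr hI hMP z.2 x.2.1 y.2.1 h with h | h
    · exact hxz h
    · exact hyz h

omit hDP hbot in
theorem conj_unionM {u v : Finset Form} {Γ : List Form}
    (hu : MDer M Γ (cjF u)) (hv : MDer M Γ (cjF v)) :
    MDer M Γ (cjF (u ∪ v)) := by
  refine MDer.conjI hI hMP (fun ψ hψ => ?_)
  rcases Finset.mem_union.1 (Finset.mem_toList.1 hψ) with h | h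
  · exact MDer.mp hI hMP (MDer.ofIPC hI hMP (cj_imp_mem h)) hu
  · exact MDer.mp hI hMP (MDer.ofIPC hI hMP (cj_imp_mem h)) hv

/-- uniqueness of maximal points -/
theorem F0_top (hK : ∀ p : Form, ((p.imp Form.bot).or
      ((p.imp Form.bot).imp Form.bot)) ∈ M) :
    ∀ x y : (F0 (M := M) (S := S) hI hMP).W,
      (∀ v, (F0 hI hMP).le x v → v = x) → (∀ v, (F0 hI hMP).le y v → v = y) →
      x = y := by
  rintro ⟨x⟩ ⟨y⟩ hx hy
  by_contra hne
  -- decompose x ∪ y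
  obtain ⟨V, hV1, hV2⟩ := decomp hI hMP S (x.1 ∪ y.1)
    (Finset.union_subset x.2.1 y.2.1)
  have hVemp : V = ∅ := by
    by_contra hVne
    obtain ⟨v, hv⟩ := Finset.nonempty_iff_ne_empty.2 hVne
    have h1 : ((cjF v).imp (cjF x.1)) ∈ M :=
      mle_trans hI hMP (hV1 v hv).2 (hI _ (cj_mono Finset.subset_union_left))
    have h2 : ((cjF v).imp (cjF y.1)) ∈ M :=
      mle_trans hI hMP (hV1 v hv).2 (hI _ (cj_mono Finset.subset_union_right))
    have e1 := hx (Quotient.mk _ (⟨v, (hV1 v hv).1⟩ : JIpt M S)) h1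
    have e2 := hy (Quotient.mk _ (⟨v, (hV1 v hv).1⟩ : JIpt M S)) h2
    exact hne (e1 ▸ e2)
  rw [hVemp] at hV2
  have hbotu : ((cjF (x.1 ∪ y.1)).imp Form.bot) ∈ M := by
    have : djW (∅ : Finset (Finset Form)) = Form.bot := by simp [djW, disjL]
    rwa [this] at hV2
  -- kc instance on cjF x.1
  rcases hDP _ _ (hK (cjF x.1)) with h | h
  · exact x.2.2.1 h
  -- h : ¬¬ (cjF x.1) ∈ M ; derive (cjF y.1 → ⊥) ∈ M
  have hD : MDer M [cjF y.1] Form.bot := by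
    have hnn : MDer M [cjF y.1] (((cjF x.1).imp Form.bot).imp Form.bot) :=
      MDer.ofM hI hMP h
    have hn : MDer M [cjF y.1] ((cjF x.1).imp Form.bot) := by
      refine MDer.intro hI hMP ?_
      have hun : MDer M [cjF x.1, cjF y.1] (cjF (x.1 ∪ y.1)) :=
        conj_unionM hI hMP (MDer.mem hI hMP (by simp))
          (MDer.mem hI hMP (by simp))
      exact MDer.mp hI hMP (MDer.ofM hI hMP hbotu) hun
    exact MDer.mp hI hMP hnn hn
  exact y.2.2.1 (MDer.intro hI hMP hD)

end Facts


open Form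

section BoxFact

variable {M : Set Form} {S : Finset Form}
  (hI : ∀ χ, IPC χ → χ ∈ M)
  (hMP : ∀ a b : Form, a ∈ M → a.imp b ∈ M → b ∈ M)
  (hDP : ∀ a b : Form, (a.or b) ∈ M → a ∈ M ∨ b ∈ M)

set_option linter.unusedSectionVars false
include hI hMP hDP

theorem F0_box
    (hW : ∀ p q : Form, ((q.imp p).or (((p.imp q).imp p).imp p)) ∈ M)
    (hB : ∀ p0 p1 p2 : Form,
      ((p0.imp (p1.or p2)).or ((p1.imp (p0.or p2)).or (p2.imp (p0.or p1)))) ∈ M) :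
    ∀ a b : (F0 (M := M) (S := S) hI hMP).W,
      (F0 hI hMP).dep b < (F0 hI hMP).dep a → (F0 hI hMP).le a b := by
  classical
  set F := F0 (M := M) (S := S) hI hMP with hF
  intro a b hdep
  by_contra hab
  set k := F.dep b with hk
  set bw := Quotient.out b with hbw
  set aw := Quotient.out a with haw
  have hout_b : (Quotient.mk _ bw : F.W) = b := Quotient.out_eq b
  have hout_a : (Quotient.mk _ aw : F.W) = a := Quotient.out_eq a
  set P1set : Finset (Finset Form) := S.powerset.filter
    (fun v => ∃ h : JI M S v,
      F.dep (Quotient.mk _ (⟨v, h⟩ : JIpt M S)) ≤ k ∧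
      (Quotient.mk _ (⟨v, h⟩ : JIpt M S) : F.W) ≠ b) with hP1set
  set P1 : Form := djW P1set with hP1
  set Q : Form := cjF bw.1 with hQ
  have hP1S : ∀ v ∈ P1set, v ⊆ S := by
    intro v hv
    exact Finset.mem_powerset.1 (Finset.mem_filter.1 hv).1
  -- bridge lemmas
  have hBRf : ∀ w : JIpt M S, ((cjF w.1).imp P1) ∈ M →
      F.dep (Quotient.mk _ w) ≤ k ∧ (Quotient.mk _ w : F.W) ≠ b := by
    intro w h
    obtain ⟨v, hvP, himp⟩ := w.2.2.2 P1set hP1S h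
    obtain ⟨hJIv, hdepv, hnev⟩ := (Finset.mem_filter.1 hvP).2
    have hle : F.le (Quotient.mk _ (⟨v, hJIv⟩ : JIpt M S)) (Quotient.mk _ w) :=
      himp
    constructor
    · exact le_trans (F.dep_le_of_le hle) hdepv
    · intro heq
      rw [heq] at hle
      exact hnev (F.eq_of_le_dep hle (by omega))
  have hBRb : ∀ w : JIpt M S, F.dep (Quotient.mk _ w) ≤ k →
      (Quotient.mk _ w : F.W) ≠ b → ((cjF w.1).imp P1) ∈ M := by
    intro w hd hne
    have hmem : w.1 ∈ P1set := by
      rw [hP1set, Finset.mem_filter]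
      exact ⟨Finset.mem_powerset.2 w.2.1, w.2, hd, hne⟩
    exact hI _ (imp_djW_mem hmem)
  have hBRQf : ∀ w : JIpt M S, ((cjF w.1).imp Q) ∈ M →
      F.le b (Quotient.mk _ w) := by
    intro w h
    have : F.le (Quotient.mk _ bw) (Quotient.mk _ w) := h
    rwa [hout_b] at this
  have hBRQb : ∀ w : JIpt M S, F.le b (Quotient.mk _ w) →
      ((cjF w.1).imp Q) ∈ M := by
    intro w h
    rw [← hout_b] at h
    exact h
  -- Q → P1 not in M
  have hQP : (Q.imp P1) ∉ M := by
    intro h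
    exact (hBRf bw h).2 hout_b
  -- Peirce part of wPL instance
  have hPeirce : (((P1.imp Q).imp P1).imp P1) ∈ M := by
    rcases hDP _ _ (hW P1 Q) with h | h
    · exact absurd h hQP
    · exact h
  set t : Form := (cjF aw.1).and (P1.imp Q) with ht
  -- union helper
  have hunion : ∀ v : Finset Form, v ⊆ S →
      (∀ z : JIpt M S, ((cjF z.1).imp (cjF (aw.1 ∪ v))) ∈ M →
        ((cjF z.1).imp P1) ∈ M) →
      ((cjF (aw.1 ∪ v)).imp P1) ∈ M := by
    intro v hvS hz
    obtain ⟨V, hV1, hV2⟩ := decomp hI hMP S (aw.1 ∪ v)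
      (Finset.union_subset aw.2.1 hvS)
    refine mle_trans hI hMP hV2 (djW_elimM hI hMP ?_)
    intro z hzV
    exact hz ⟨z, (hV1 z hzV).1⟩ (hV1 z hzV).2
  have hUP1 : ∀ v ∈ P1set, ((cjF (aw.1 ∪ v)).imp P1) ∈ M := by
    intro v hvP
    obtain ⟨hJIv, hdepv, hnev⟩ := (Finset.mem_filter.1 hvP).2
    refine hunion v (hP1S v hvP) ?_
    intro z hzimp
    have hza : F.le a (Quotient.mk _ z) := by
      rw [← hout_a]
      exact mle_trans hI hMP hzimp (hI _ (cj_mono Finset.subset_union_left))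
    have hzv : F.le (Quotient.mk _ (⟨v, hJIv⟩ : JIpt M S)) (Quotient.mk _ z) :=
      mle_trans hI hMP hzimp (hI _ (cj_mono Finset.subset_union_right))
    refine hBRb z (le_trans (F.dep_le_of_le hzv) hdepv) ?_
    intro heq
    rw [heq] at hza
    exact hab hza
  have hUQ : ((cjF (aw.1 ∪ bw.1)).imp P1) ∈ M := by
    refine hunion bw.1 bw.2.1 ?_
    intro z hzimp
    have hza : F.le a (Quotient.mk _ z) := by
      rw [← hout_a]
      exact mle_trans hI hMP hzimp (hI _ (cj_mono Finset.subset_union_left))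
    have hzb : F.le b (Quotient.mk _ z) := by
      rw [← hout_b]
      exact mle_trans hI hMP hzimp (hI _ (cj_mono Finset.subset_union_right))
    have hne : (Quotient.mk _ z : F.W) ≠ b := by
      intro heq
      rw [heq] at hza
      exact hab hza
    have hlt : F.lt b (Quotient.mk _ z) := ⟨hzb, fun h => hne h.symm⟩
    exact hBRb z (by have := F.dep_lt_of_lt hlt; omega) hne
  -- main case analysis via bw2 instance on (t, P1, Q)
  have hT : (t.imp P1) ∈ M := by
    rcases hDP _ _ (hB t P1 Q) with hc1 | hrest
    · -- c1
      have hD : MDer M [t] P1 := by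
        have hor : MDer M [t] (P1.or Q) :=
          MDer.mp hI hMP (MDer.ofM hI hMP hc1)
            (MDer.mem hI hMP (List.mem_cons_self))
        refine MDer.orE hI hMP hor ?_ ?_
        · -- branch P1 : disjE over P1set
          refine MDer.disjE hI hMP
            (MDer.mem hI hMP (List.mem_cons_self)) ?_
          intro ψ hψ
          obtain ⟨v, hvl, rfl⟩ := List.mem_map.1 hψ
          have hvP := Finset.mem_toList.1 hvl
          have haw : MDer M [cjF v, P1, t] (cjF aw.1) := by
            have htm : MDer M [cjF v, P1, t] t :=
              MDer.mem hI hMP (by simp [ht])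
            exact MDer.andE1 hI hMP htm
          have hcv : MDer M [cjF v, P1, t] (cjF v) :=
            MDer.mem hI hMP (List.mem_cons_self)
          exact MDer.mp hI hMP (MDer.ofM hI hMP (hUP1 v hvP))
            (conj_unionM hI hMP haw hcv)
        · -- branch Q
          have haw : MDer M [Q, t] (cjF aw.1) := by
            have htm : MDer M [Q, t] t := MDer.mem hI hMP (by simp [ht])
            exact MDer.andE1 hI hMP htm
          have hq : MDer M [Q, t] (cjF bw.1) :=
            MDer.mem hI hMP (List.mem_cons_self)
          exact MDer.mp hI hMP (MDer.ofM hI hMP hUQ)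
            (conj_unionM hI hMP haw hq)
      exact MDer.intro hI hMP hD
    rcases hDP _ _ hrest with hc2 | hc3
    · -- c2 : impossible
      exfalso
      have hk1 : 1 ≤ k := by
        rw [hk]; exact F.dep_pos b
      obtain ⟨c, hac, hcd⟩ := F.exists_dep_between hk1 (le_of_lt hdep)
      set cw := Quotient.out c with hcw
      have hout_c : (Quotient.mk _ cw : F.W) = c := Quotient.out_eq c
      have hcb : c ≠ b := by
        intro h
        rw [h] at hac
        exact hab hac
      have hcP1 : ((cjF cw.1).imp P1) ∈ M := by
        refine hBRb cw ?_ ?_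
        · rw [hout_c, hcd]
        · rw [hout_c]; exact hcb
      have hcQ : ((cjF cw.1).imp Q) ∈ M := by
        have hD : MDer M [cjF cw.1] Q := by
          have htq : MDer M [cjF cw.1] (t.or Q) :=
            MDer.mp hI hMP (MDer.ofM hI hMP (mle_trans hI hMP hcP1 hc2))
              (MDer.mem hI hMP (List.mem_cons_self))
          refine MDer.orE hI hMP htq ?_
            (MDer.mem hI hMP (List.mem_cons_self))
          -- branch t
          have hu : MDer M [t, cjF cw.1] (P1.imp Q) :=
            MDer.andE2 hI hMP (MDer.mem hI hMP (List.mem_cons_self))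
          have hp : MDer M [t, cjF cw.1] P1 :=
            MDer.mp hI hMP (MDer.ofM hI hMP hcP1) (MDer.mem hI hMP (by simp))
          exact MDer.mp hI hMP hu hp
        exact hD
      have hle := hBRQf cw hcQ
      rw [hout_c] at hle
      have : b = c := F.eq_of_le_dep hle (by omega)
      exact hcb this.symm
    · -- c3 : impossible
      exfalso
      have hQ3 : ((cjF bw.1).imp ((cjF aw.1).or P1)) ∈ M := by
        have hD : MDer M [cjF bw.1] ((cjF aw.1).or P1) := by
          have htp : MDer M [cjF bw.1] (t.or P1) :=
            MDer.mp hI hMP (MDer.ofM hI hMP hc3)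
              (MDer.mem hI hMP (List.mem_cons_self))
          refine MDer.orE hI hMP htp ?_ ?_
          · refine MDer.orI1 hI hMP ?_
            exact MDer.andE1 hI hMP (MDer.mem hI hMP (List.mem_cons_self))
          · exact MDer.orI2 hI hMP (MDer.mem hI hMP (List.mem_cons_self))
        exact hD
      set W : Finset (Finset Form) := insert aw.1 P1set with hWdef
      have hWS : ∀ v ∈ W, v ⊆ S := by
        intro v hv
        rcases Finset.mem_insert.1 hv with rfl | hv
        · exact aw.2.1
        · exact hP1S v hv
      have hwd : ((cjF bw.1).imp (djW W)) ∈ M := by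
        have hD : MDer M [cjF bw.1] (djW W) := by
          have hor : MDer M [cjF bw.1] ((cjF aw.1).or P1) :=
            MDer.mp hI hMP (MDer.ofM hI hMP hQ3)
              (MDer.mem hI hMP (List.mem_cons_self))
          refine MDer.orE hI hMP hor ?_ ?_
          · exact MDer.mp hI hMP
              (MDer.ofIPC hI hMP (imp_djW_mem (Finset.mem_insert_self _ _)))
              (MDer.mem hI hMP (List.mem_cons_self))
          · exact MDer.mp hI hMP
              (MDer.ofIPC hI hMP (djW_mono (Finset.subset_insert _ _)))
              (MDer.mem hI hMP (List.mem_cons_self))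
        exact hD
      obtain ⟨v, hvW, himp⟩ := bw.2.2.2 W hWS hwd
      rcases Finset.mem_insert.1 hvW with rfl | hvP
      · -- v = aw.1 : gives le a b
        have : F.le (Quotient.mk _ aw) (Quotient.mk _ bw) := himp
        rw [hout_a, hout_b] at this
        exact hab this
      · obtain ⟨hJIv, hdepv, hnev⟩ := (Finset.mem_filter.1 hvP).2
        have hle : F.le (Quotient.mk _ (⟨v, hJIv⟩ : JIpt M S))
            (Quotient.mk _ bw) := himp
        rw [hout_b] at hle
        exact hnev (F.eq_of_le_dep hle (by omega))
  -- conclude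
  have hcur : ((cjF aw.1).imp ((P1.imp Q).imp P1)) ∈ M := by
    have hD : MDer M [P1.imp Q, cjF aw.1] P1 := by
      refine MDer.mp hI hMP (MDer.ofM hI hMP hT) ?_
      exact MDer.andI hI hMP (MDer.mem hI hMP (by simp))
        (MDer.mem hI hMP (List.mem_cons_self))
    exact MDer.intro hI hMP (MDer.intro hI hMP hD)
  have hfin : ((cjF aw.1).imp P1) ∈ M := mle_trans hI hMP hcur hPeirce
  have h2 := (hBRf aw hfin).1
  rw [hout_a] at h2
  rw [hk] at h2
  exact absurd hdep (not_lt.2 h2)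

end BoxFact


open Form

theorem oplus_SI (L Γ : Set Form) : IsSILogic (oplus L Γ) := by
  refine ⟨?_, ?_, ?_⟩
  · intro χ hχ
    intro X hX
    exact hX.1.1 hχ
  · intro φ ψ h1 h2
    intro X hX
    exact hX.1.2.1 φ ψ (h1 X hX) (h2 X hX)
  · intro φ σ h
    intro X hX
    exact hX.1.2.2 φ σ (h X hX)

theorem oplus_left (L Γ : Set Form) : L ⊆ oplus L Γ := by
  intro x hx X hX
  exact hX.2.1 hx

theorem oplus_right (L Γ : Set Form) : Γ ⊆ oplus L Γ := by
  intro x hx X hX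
  exact hX.2.2 hx

theorem Box_SI : IsSILogic BoxLogic := oplus_SI _ _

theorem wPLax_mem : wPLax ∈ BoxLogic :=
  oplus_left _ _ (oplus_right IPCSet {wPLax} rfl)

theorem bw2ax_mem : bw2ax ∈ BoxLogic := oplus_right _ _ (by left; rfl)

theorem kcax_mem : kcax ∈ BoxLogic := oplus_right _ _ (by right; rfl)

theorem IPC_mem_Box {χ : Form} (h : IPC χ) : χ ∈ BoxLogic := Box_SI.1 h

/-- subformulas -/
def subf : Form → Finset Form
  | .var n => {.var n}
  | .bot => {.bot}
  | .top => {.top}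
  | .and a b => insert (.and a b) (subf a ∪ subf b)
  | .or a b => insert (.or a b) (subf a ∪ subf b)
  | .imp a b => insert (.imp a b) (subf a ∪ subf b)

theorem mem_subf_self (φ : Form) : φ ∈ subf φ := by
  cases φ <;> simp [subf]

theorem subf_closed : ∀ φ a b : Form,
    ((Form.and a b ∈ subf φ → a ∈ subf φ ∧ b ∈ subf φ) ∧
     (Form.or a b ∈ subf φ → a ∈ subf φ ∧ b ∈ subf φ) ∧
     (Form.imp a b ∈ subf φ → a ∈ subf φ ∧ b ∈ subf φ)) := by
  intro φ
  induction φ with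
  | var n => intro a b; refine ⟨?_, ?_, ?_⟩ <;> (intro h; simp [subf] at h)
  | bot => intro a b; refine ⟨?_, ?_, ?_⟩ <;> (intro h; simp [subf] at h)
  | top => intro a b; refine ⟨?_, ?_, ?_⟩ <;> (intro h; simp [subf] at h)
  | and x y ihx ihy =>
      intro a b
      refine ⟨?_, ?_, ?_⟩ <;> intro h <;> simp only [subf, Finset.mem_insert,
        Finset.mem_union] at h ⊢
      · rcases h with h | h | h
        · simp only [Form.and.injEq] at h
          obtain ⟨rfl, rfl⟩ := h
          exact ⟨Or.inr (Or.inl (mem_subf_self _)),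
            Or.inr (Or.inr (mem_subf_self _))⟩
        · have := (ihx a b).1 h
          exact ⟨Or.inr (Or.inl this.1), Or.inr (Or.inl this.2)⟩
        · have := (ihy a b).1 h
          exact ⟨Or.inr (Or.inr this.1), Or.inr (Or.inr this.2)⟩
      · rcases h with h | h | h
        · cases h
        · have := (ihx a b).2.1 h
          exact ⟨Or.inr (Or.inl this.1), Or.inr (Or.inl this.2)⟩
        · have := (ihy a b).2.1 h
          exact ⟨Or.inr (Or.inr this.1), Or.inr (Or.inr this.2)⟩
      · rcases h with h | h | h
        · cases h
        · have := (ihx a b).2.2 h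
          exact ⟨Or.inr (Or.inl this.1), Or.inr (Or.inl this.2)⟩
        · have := (ihy a b).2.2 h
          exact ⟨Or.inr (Or.inr this.1), Or.inr (Or.inr this.2)⟩
  | or x y ihx ihy =>
      intro a b
      refine ⟨?_, ?_, ?_⟩ <;> intro h <;> simp only [subf, Finset.mem_insert,
        Finset.mem_union] at h ⊢
      · rcases h with h | h | h
        · cases h
        · have := (ihx a b).1 h
          exact ⟨Or.inr (Or.inl this.1), Or.inr (Or.inl this.2)⟩
        · have := (ihy a b).1 h
          exact ⟨Or.inr (Or.inr this.1), Or.inr (Or.inr this.2)⟩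
      · rcases h with h | h | h
        · simp only [Form.or.injEq] at h
          obtain ⟨rfl, rfl⟩ := h
          exact ⟨Or.inr (Or.inl (mem_subf_self _)),
            Or.inr (Or.inr (mem_subf_self _))⟩
        · have := (ihx a b).2.1 h
          exact ⟨Or.inr (Or.inl this.1), Or.inr (Or.inl this.2)⟩
        · have := (ihy a b).2.1 h
          exact ⟨Or.inr (Or.inr this.1), Or.inr (Or.inr this.2)⟩
      · rcases h with h | h | h
        · cases h
        · have := (ihx a b).2.2 h
          exact ⟨Or.inr (Or.inl this.1), Or.inr (Or.inl this.2)⟩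
        · have := (ihy a b).2.2 h
          exact ⟨Or.inr (Or.inr this.1), Or.inr (Or.inr this.2)⟩
  | imp x y ihx ihy =>
      intro a b
      refine ⟨?_, ?_, ?_⟩ <;> intro h <;> simp only [subf, Finset.mem_insert,
        Finset.mem_union] at h ⊢
      · rcases h with h | h | h
        · cases h
        · have := (ihx a b).1 h
          exact ⟨Or.inr (Or.inl this.1), Or.inr (Or.inl this.2)⟩
        · have := (ihy a b).1 h
          exact ⟨Or.inr (Or.inr this.1), Or.inr (Or.inr this.2)⟩
      · rcases h with h | h | h
        · cases h
        · have := (ihx a b).2.1 h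
          exact ⟨Or.inr (Or.inl this.1), Or.inr (Or.inl this.2)⟩
        · have := (ihy a b).2.1 h
          exact ⟨Or.inr (Or.inr this.1), Or.inr (Or.inr this.2)⟩
      · rcases h with h | h | h
        · simp only [Form.imp.injEq] at h
          obtain ⟨rfl, rfl⟩ := h
          exact ⟨Or.inr (Or.inl (mem_subf_self _)),
            Or.inr (Or.inr (mem_subf_self _))⟩
        · have := (ihx a b).2.2 h
          exact ⟨Or.inr (Or.inl this.1), Or.inr (Or.inl this.2)⟩
        · have := (ihy a b).2.2 h
          exact ⟨Or.inr (Or.inr this.1), Or.inr (Or.inr this.2)⟩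

/-- **Completeness of Box with respect to finite boxes.** -/
theorem completeness (φ0 : Form) (hφ : φ0 ∉ BoxLogic) :
    ∃ F : Frame, Finite F.W ∧ F.Rooted ∧ (¬ F.Valid φ0) ∧
      (∀ x y z : F.W, (¬ F.le x y) → (¬ F.le y x) → (¬ F.le x z) →
        (¬ F.le z x) → (¬ F.le y z) → (¬ F.le z y) → False) ∧
      (∀ x y : F.W, (∀ v, F.le x v → v = x) → (∀ v, F.le y v → v = y) →
        x = y) ∧
      (∀ (a b : F.W) (da db : ℕ), F.depthEq a da → F.depthEq b db →
        db < da → F.le a b) := by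
  obtain ⟨M, hfil, hφM, hDP⟩ := maxfil BoxLogic
    ⟨fun χ h => IPC_mem_Box h, fun a b h1 h2 => Box_SI.2.1 a b h1 h2⟩ φ0 hφ
  have hI : ∀ χ, IPC χ → χ ∈ M := fun χ h => hfil.1 (IPC_mem_Box h)
  have hMP : ∀ a b : Form, a ∈ M → a.imp b ∈ M → b ∈ M := hfil.2
  have hbot : Form.bot ∉ M := by
    intro h
    exact hφM (hMP _ _ h (hI _ (IPC.botE φ0)))
  have hW : ∀ p q : Form, ((q.imp p).or (((p.imp q).imp p).imp p)) ∈ M := by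
    intro p q
    have := Box_SI.2.2 wPLax (fun n => if n = 0 then p else q) wPLax_mem
    simpa [wPLax, Form.subst] using hfil.1 this
  have hB : ∀ p0 p1 p2 : Form,
      ((p0.imp (p1.or p2)).or ((p1.imp (p0.or p2)).or
        (p2.imp (p0.or p1)))) ∈ M := by
    intro p0 p1 p2
    have := Box_SI.2.2 bw2ax
      (fun n => if n = 0 then p0 else if n = 1 then p1 else p2) bw2ax_mem
    simpa [bw2ax, Form.subst] using hfil.1 this
  have hK : ∀ p : Form,
      ((p.imp Form.bot).or ((p.imp Form.bot).imp Form.bot)) ∈ M := by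
    intro p
    have := Box_SI.2.2 kcax (fun _ => p) kcax_mem
    simpa [kcax, Form.subst, Form.neg] using hfil.1 this
  set S : Finset Form := subf φ0 with hS
  have hSc : ∀ a b : Form, ((a.and b ∈ S → a ∈ S ∧ b ∈ S) ∧
      (a.or b ∈ S → a ∈ S ∧ b ∈ S) ∧ (a.imp b ∈ S → a ∈ S ∧ b ∈ S)) :=
    fun a b => subf_closed φ0 a b
  refine ⟨F0 (M := M) (S := S) hI hMP,
    inferInstance, F0_rooted hI hMP hDP hbot,
    F0_refutes hI hMP hDP hbot (mem_subf_self φ0) hφM hSc,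
    F0_width hI hMP hB hDP, F0_top hI hMP hDP hbot hK, ?_⟩
  intro a b da db hda hdb hlt
  have h1 := (F0 hI hMP).depthEq_unique hda
  have h2 := (F0 hI hMP).depthEq_unique hdb
  exact F0_box hI hMP hDP hW hB a b (by omega)

end IPCX
section Corr

namespace Frame

variable (G : Frame)

theorem G_width (hval : G.Valid bw2ax) (hroot : G.Rooted) :
    ∀ x y z : G.W, (¬ G.le x y) → (¬ G.le y x) → (¬ G.le x z) →
      (¬ G.le z x) → (¬ G.le y z) → (¬ G.le z y) → False := by
  intro x y z hxy hyx hxz hzx hyz hzy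
  obtain ⟨r, hr⟩ := hroot
  set V : ℕ → G.W → Prop := fun p w =>
    (p = 0 ∧ G.le x w) ∨ (p = 1 ∧ G.le y w) ∨ (p = 2 ∧ G.le z w) with hV
  have hpers : G.Persistent V := by
    rintro p a b hab (⟨hp, h⟩ | ⟨hp, h⟩ | ⟨hp, h⟩)
    · exact Or.inl ⟨hp, G.trans _ _ _ h hab⟩
    · exact Or.inr (Or.inl ⟨hp, G.trans _ _ _ h hab⟩)
    · exact Or.inr (Or.inr ⟨hp, G.trans _ _ _ h hab⟩)
  have hf := hval V hpers r
  simp only [bw2ax, Frame.force] at hf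
  rcases hf with hf | hf | hf
  · have h6 := hf x (hr x) (Or.inl ⟨rfl, G.refl x⟩)
    rcases h6 with (⟨h, h2⟩ | ⟨h, h2⟩ | ⟨h, h2⟩) | (⟨h, h2⟩ | ⟨h, h2⟩ | ⟨h, h2⟩)
    · simp at h
    · exact hyx h2
    · simp at h
    · simp at h
    · simp at h
    · exact hzx h2
  · have h6 := hf y (hr y) (Or.inr (Or.inl ⟨rfl, G.refl y⟩))
    rcases h6 with (⟨h, h2⟩ | ⟨h, h2⟩ | ⟨h, h2⟩) | (⟨h, h2⟩ | ⟨h, h2⟩ | ⟨h, h2⟩)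
    · exact hxy h2
    · simp at h
    · simp at h
    · simp at h
    · simp at h
    · exact hzy h2
  · have h6 := hf z (hr z) (Or.inr (Or.inr ⟨rfl, G.refl z⟩))
    rcases h6 with (⟨h, h2⟩ | ⟨h, h2⟩ | ⟨h, h2⟩) | (⟨h, h2⟩ | ⟨h, h2⟩ | ⟨h, h2⟩)
    · exact hxz h2
    · simp at h
    · simp at h
    · simp at h
    · exact hyz h2
    · simp at h

theorem G_max_unique (hval : G.Valid kcax) (hroot : G.Rooted) :
    ∀ x y : G.W, (∀ v, G.le x v → v = x) → (∀ v, G.le y v → v = y) →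
      x = y := by
  intro m1 m2 hm1 hm2
  by_contra hne
  obtain ⟨r, hr⟩ := hroot
  set V : ℕ → G.W → Prop := fun _ w => G.le m1 w with hV
  have hpers : G.Persistent V := by
    intro p a b hab h
    exact G.trans _ _ _ h hab
  have hf := hval V hpers r
  simp only [kcax, Form.neg, Frame.force] at hf
  rcases hf with hf | hf
  · exact hf m1 (hr m1) (G.refl m1)
  · refine hf m2 (hr m2) ?_
    intro u hu hVu
    rw [hm2 u hu] at hVu
    exact hne (hm1 m2 hVu).symm

variable [Finite G.W]

theorem G_box (hval : G.Valid wPLax) (hroot : G.Rooted) :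
    ∀ a b : G.W, G.dep b < G.dep a → G.le a b := by
  intro a b hdep
  by_contra hab
  obtain ⟨r, hr⟩ := hroot
  set k := G.dep b with hk
  set V : ℕ → G.W → Prop := fun p w =>
    (p = 0 ∧ (G.dep w ≤ k ∧ w ≠ b)) ∨ (p = 1 ∧ G.le b w) with hV
  have hpers : G.Persistent V := by
    rintro p u v huv (⟨hp, hd, hne⟩ | ⟨hp, h⟩)
    · refine Or.inl ⟨hp, le_trans (G.dep_le_of_le huv) hd, ?_⟩
      intro heq
      subst heq
      exact hne (G.eq_of_le_dep huv (by omega))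
    · exact Or.inr ⟨hp, G.trans _ _ _ h huv⟩
  have hf := hval V hpers r
  simp only [wPLax, Frame.force] at hf
  rcases hf with hf | hf
  · have := hf b (hr b) (Or.inr ⟨rfl, G.refl b⟩)
    rcases this with ⟨_, _, hne⟩ | ⟨hp, _⟩
    · exact hne rfl
    · simp at hp
  · have hmain := hf a (hr a) ?_
    · rcases hmain with ⟨_, hd, _⟩ | ⟨hp, _⟩
      · omega
      · simp at hp
    · -- show force ((p→q)→p) at a
      intro u hau hpq
      by_contra hpu
      have hub : u ≠ b := by
        intro heq
        subst heq
        exact hab hau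
      have hud : k < G.dep u := by
        by_contra hle
        exact hpu (Or.inl ⟨rfl, by omega, hub⟩)
      have hk1 : 1 ≤ k := by rw [hk]; exact G.dep_pos b
      obtain ⟨c, huc, hcd⟩ := G.exists_dep_between hk1 (le_of_lt hud)
      have hcb : c ≠ b := by
        intro heq
        subst heq
        exact hab (G.trans _ _ _ hau huc)
      have := hpq c huc (Or.inl ⟨rfl, by omega, hcb⟩)
      rcases this with ⟨hp, _⟩ | ⟨_, hbc⟩
      · simp at hp
      · exact hcb (G.eq_of_le_dep hbc (by omega)).symm

end Frame

end Corr
section Preserve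

theorem force_pmorph {P Q : Frame} (f : P.W → Q.W) (hmono : ∀ a b, P.le a b → Q.le (f a) (f b))
    (hback : ∀ a b, Q.le (f a) b → ∃ a', P.le a a' ∧ f a' = b)
    (V : ℕ → Q.W → Prop) :
    ∀ (ψ : Form) (x : P.W),
      P.force (fun p w => V p (f w)) ψ x ↔ Q.force V ψ (f x) := by
  intro ψ
  induction ψ with
  | var p => intro x; exact Iff.rfl
  | bot => intro x; exact Iff.rfl
  | top => intro x; exact Iff.rfl
  | and a b iha ihb =>
      intro x
      simp only [Frame.force]
      rw [iha x, ihb x]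
  | or a b iha ihb =>
      intro x
      simp only [Frame.force]
      rw [iha x, ihb x]
  | imp a b iha ihb =>
      intro x
      simp only [Frame.force]
      constructor
      · intro h v hv hfa
        obtain ⟨x', hx', rfl⟩ := hback x v hv
        exact (ihb x').1 (h x' hx' ((iha x').2 hfa))
      · intro h v hv hfa
        exact (ihb v).2 (h (f v) (hmono _ _ hv) ((iha v).1 hfa))

theorem Valid.of_pmorphic {P Q : Frame} (h : PMorphicImage P Q) {φ : Form}
    (hv : P.Valid φ) : Q.Valid φ := by
  obtain ⟨f, ⟨hmono, hback⟩, hsurj⟩ := h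
  intro V hV w
  obtain ⟨x, rfl⟩ := hsurj w
  refine (force_pmorph f hmono hback V φ x).1 ?_
  refine hv (fun p w => V p (f w)) ?_ x
  intro p a b hab hV'
  exact hV p (f a) (f b) (hmono _ _ hab) hV'

theorem force_up {P : Frame} (z : P.W) (V : ℕ → (P.up z).W → Prop)
    (hV : (P.up z).Persistent V) :
    ∀ (ψ : Form) (u : (P.up z).W),
      (P.up z).force V ψ u ↔
        P.force (fun p w => ∃ h : P.le z w, V p ⟨w, h⟩) ψ u.1 := by
  intro ψ
  induction ψ with
  | var p =>
      intro u
      constructor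
      · intro h
        exact ⟨u.2, h⟩
      · rintro ⟨h, hv⟩
        have : (⟨u.1, h⟩ : (P.up z).W) = u := rfl
        rwa [this] at hv
  | bot => intro u; exact Iff.rfl
  | top => intro u; exact Iff.rfl
  | and a b iha ihb =>
      intro u
      simp only [Frame.force]
      rw [iha u, ihb u]
  | or a b iha ihb =>
      intro u
      simp only [Frame.force]
      rw [iha u, ihb u]
  | imp a b iha ihb =>
      intro u
      simp only [Frame.force]
      constructor
      · intro h v hv hfa
        have hzv : P.le z v := P.trans _ _ _ u.2 hv
        exact (ihb ⟨v, hzv⟩).1 (h ⟨v, hzv⟩ hv ((iha ⟨v, hzv⟩).2 hfa))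
      · intro h v hv hfa
        exact (ihb v).2 (h v.1 hv ((iha v).1 hfa))

theorem Valid.up {P : Frame} (z : P.W) {φ : Form} (hv : P.Valid φ) :
    (P.up z).Valid φ := by
  intro V hV u
  refine (force_up z V hV φ u).2 ?_
  refine hv (fun p w => ∃ h : P.le z w, V p ⟨w, h⟩) ?_ u.1
  rintro p a b hab ⟨h, hva⟩
  exact ⟨P.trans _ _ _ h hab, hV p ⟨a, h⟩ ⟨b, _⟩ hab hva⟩

end Preserve
section Pmorph

theorem stack_pmorph (G B : Frame) [Finite G.W] [Finite B.W]
    (hGroot : G.Rooted) (hGbox : ∀ a b : G.W, G.dep b < G.dep a → G.le a b)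
    (hBbox : ∀ a b : B.W, B.dep b < B.dep a → B.le a b)
    (hBw3 : ∀ x y z : B.W, (¬ B.le x y) → (¬ B.le y x) → (¬ B.le x z) →
      (¬ B.le z x) → (¬ B.le y z) → (¬ B.le z y) → False)
    (hBmax : ∀ x y : B.W, (∀ v, B.le x v → v = x) → (∀ v, B.le y v → v = y) →
      x = y)
    {rB : B.W} (hrB : ∀ w, B.le rB w)
    (hstack : HasStack G (B.dep rB + 1)) :
    ∃ z : G.W, PMorphicImage (G.up z) B := by
  classical
  set D := B.dep rB with hD
  have hD1 : 1 ≤ D := B.dep_pos rB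
  -- uniqueness at depth 1 and D in B
  have hmax1 : ∀ v : B.W, B.dep v = 1 → ∀ u, B.le v u → u = v := by
    intro v hv u hle
    exact (B.eq_of_le_dep hle (by have := B.dep_pos u; omega)).symm
  have huniq1 : ∀ v v' : B.W, B.dep v = 1 → B.dep v' = 1 → v = v' := by
    intro v v' hv hv'
    exact hBmax v v' (hmax1 v hv) (hmax1 v' hv')
  have huniqD : ∀ v : B.W, B.dep v = D → v = rB := by
    intro v hv
    exact (B.eq_of_le_dep (hrB v) (by omega)).symm
  -- coverage of B-layers
  have hcov : ∀ e : ℕ, ∃ x y : B.W, (1 ≤ e ∧ e ≤ D) →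
      (B.dep x = e ∧ B.dep y = e ∧ ∀ v, B.dep v = e → v = x ∨ v = y) := by
    intro e
    by_cases he : 1 ≤ e ∧ e ≤ D
    · obtain ⟨pt, -, hptd⟩ := B.exists_dep_between (w := rB) he.1 (by omega)
      by_cases h2 : ∃ q : B.W, B.dep q = e ∧ q ≠ pt
      · obtain ⟨q, hqd, hqne⟩ := h2
        refine ⟨pt, q, fun _ => ⟨hptd, hqd, ?_⟩⟩
        intro v hv
        by_contra hcon
        push_neg at hcon
        obtain ⟨hv1, hv2⟩ := hcon
        have hinc : ∀ x y : B.W, B.dep x = e → B.dep y = e → x ≠ y →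
            ¬ B.le x y := by
          intro x y hx hy hne hle
          exact hne (B.eq_of_le_dep hle (by omega))
        exact hBw3 v pt q (hinc _ _ hv hptd hv1) (hinc _ _ hptd hv hv1.symm)
          (hinc _ _ hv hqd hv2) (hinc _ _ hqd hv hv2.symm)
          (hinc _ _ hptd hqd (fun h => hqne h.symm)) (hinc _ _ hqd hptd hqne)
      · refine ⟨pt, pt, fun _ => ⟨hptd, hptd, ?_⟩⟩
        intro v hv
        left
        by_contra hcon
        exact h2 ⟨v, hv, hcon⟩
    · exact ⟨rB, rB, fun hc => absurd hc he⟩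
  choose PA PB hP using hcov
  -- G stack witnesses
  obtain ⟨j, hj⟩ := hstack
  have hwit : ∀ i : ℕ, ∃ x y : G.W, (j ≤ i ∧ i < j + (D + 1)) →
      (x ≠ y ∧ G.dep x = i ∧ G.dep y = i) := by
    intro i
    by_cases hi : j ≤ i ∧ i < j + (D + 1)
    · obtain ⟨x, y, hxy, h1, h2⟩ := hj i hi.1 hi.2
      exact ⟨x, y, fun _ => ⟨hxy, (G.depthEq_unique h1).symm,
        (G.depthEq_unique h2).symm⟩⟩
    · obtain ⟨r, -⟩ := hGroot
      exact ⟨r, r, fun hc => absurd hc hi⟩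
  choose GA GB hG using hwit
  have hj1 : 1 ≤ j := by
    obtain ⟨x, y, hxy, h1, h2⟩ := hj j le_rfl (by omega)
    have := G.depthEq_unique h1
    have := G.dep_pos x
    omega
  set z := GA (j + D - 1) with hz
  have hzw := hG (j + D - 1) ⟨by omega, by omega⟩
  have hzd : G.dep z = j + D - 1 := hzw.2.1
  -- the map
  set f : (G.up z).W → B.W := fun u =>
    if G.dep u.1 ≤ j then PA 1
    else (if u.1 = GB (G.dep u.1) then PB (G.dep u.1 - j + 1)
      else PA (G.dep u.1 - j + 1)) with hf
  have hrange : ∀ u : (G.up z).W, 1 ≤ G.dep u.1 ∧ G.dep u.1 ≤ j + D - 1 := by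
    intro u
    refine ⟨G.dep_pos u.1, ?_⟩
    have := G.dep_le_of_le u.2
    omega
  have hfdep : ∀ u : (G.up z).W,
      (G.dep u.1 ≤ j → B.dep (f u) = 1) ∧
      (j < G.dep u.1 → B.dep (f u) = G.dep u.1 - j + 1) := by
    intro u
    obtain ⟨hr1, hr2⟩ := hrange u
    constructor
    · intro h
      simp only [hf, if_pos h]
      exact (hP 1 ⟨le_rfl, hD1⟩).1
    · intro h
      simp only [hf, if_neg (by omega : ¬ G.dep u.1 ≤ j)]
      by_cases hb : u.1 = GB (G.dep u.1)
      · simp only [if_pos hb]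
        exact (hP (G.dep u.1 - j + 1) ⟨by omega, by omega⟩).2.1
      · simp only [if_neg hb]
        exact (hP (G.dep u.1 - j + 1) ⟨by omega, by omega⟩).1
  have hmono : ∀ u v : (G.up z).W, (G.up z).le u v → B.le (f u) (f v) := by
    intro u v huv
    have hdlev : G.dep v.1 ≤ G.dep u.1 := G.dep_le_of_le huv
    by_cases hu : G.dep u.1 ≤ j
    · -- both map to PA 1
      have hv : G.dep v.1 ≤ j := by omega
      have e1 : f u = PA 1 := by simp only [hf, if_pos hu]
      have e2 : f v = PA 1 := by simp only [hf, if_pos hv]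
      rw [e1, e2]
      exact B.refl _
    · by_cases hv : G.dep v.1 ≤ j
      · -- strict drop to depth 1
        have h1 : B.dep (f v) = 1 := (hfdep v).1 hv
        have h2 : B.dep (f u) = G.dep u.1 - j + 1 := (hfdep u).2 (by omega)
        exact hBbox _ _ (by omega)
      · by_cases hde : G.dep v.1 = G.dep u.1
        · have : u.1 = v.1 := G.eq_of_le_dep huv (by omega)
          have : u = v := Subtype.ext this
          rw [this]
          exact B.refl _
        · have h1 : B.dep (f v) = G.dep v.1 - j + 1 := (hfdep v).2 (by omega)
          have h2 : B.dep (f u) = G.dep u.1 - j + 1 := (hfdep u).2 (by omega)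
          exact hBbox _ _ (by omega)
  have hback : ∀ u : (G.up z).W, ∀ y : B.W, B.le (f u) y →
      ∃ w : (G.up z).W, (G.up z).le u w ∧ f w = y := by
    intro u y hle
    by_cases hey : y = f u
    · exact ⟨u, (G.up z).refl u, hey.symm⟩
    · have hdy : B.dep y < B.dep (f u) := by
        rcases lt_or_ge (B.dep y) (B.dep (f u)) with h | h
        · exact h
        · exact absurd (B.eq_of_le_dep hle h).symm hey
      have hy1 : 1 ≤ B.dep y := B.dep_pos y
      by_cases hu : G.dep u.1 ≤ j
      · have := (hfdep u).1 hu
        omega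
      · have hfu : B.dep (f u) = G.dep u.1 - j + 1 := (hfdep u).2 (by omega)
        obtain ⟨hr1, hr2⟩ := hrange u
        by_cases he1 : B.dep y = 1
        · -- find a point of G-depth 1 above u
          obtain ⟨w, huw, hwd⟩ := G.exists_dep_between (le_refl 1) hr1
          have hzw : G.le z w := G.trans _ _ _ u.2 huw
          refine ⟨⟨w, hzw⟩, huw, ?_⟩
          have : f ⟨w, hzw⟩ = PA 1 := by
            simp only [hf]
            rw [if_pos (by omega : G.dep w ≤ j)]
          rw [this]
          exact huniq1 _ _ (hP 1 ⟨le_rfl, hD1⟩).1 he1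
        · -- middle layer
          set e' := B.dep y with he'
          have he2 : 2 ≤ e' := by omega
          have he'D : e' ≤ D - 1 := by
            have hfuD : B.dep (f u) ≤ D := by
              rw [hfu]; omega
            omega
          have hGw := hG (j + e' - 1) ⟨by omega, by omega⟩
          obtain ⟨hGne, hGAd, hGBd⟩ := hGw
          have hcover := (hP e' ⟨by omega, by omega⟩).2.2 y rfl
          have hdep_lt : j + e' - 1 < G.dep u.1 := by omega
          rcases hcover with hya | hyb
          · set w := GA (j + e' - 1) with hw
            have huw : G.le u.1 w := hGbox _ _ (by omega)
            have hzw : G.le z w := G.trans _ _ _ u.2 huw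
            refine ⟨⟨w, hzw⟩, huw, ?_⟩
            have hwd : G.dep w = j + e' - 1 := hGAd
            have : f ⟨w, hzw⟩ = PA e' := by
              simp only [hf]
              rw [if_neg (by omega : ¬ G.dep w ≤ j)]
              rw [if_neg (by rw [hwd]; exact hGne)]
              congr 1
              omega
            rw [this, hya]
          · set w := GB (j + e' - 1) with hw
            have hwd : G.dep w = j + e' - 1 := hGBd
            have huw : G.le u.1 w := hGbox _ _ (by omega)
            have hzw : G.le z w := G.trans _ _ _ u.2 huw
            refine ⟨⟨w, hzw⟩, huw, ?_⟩
            have : f ⟨w, hzw⟩ = PB e' := by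
              simp only [hf]
              rw [if_neg (by omega : ¬ G.dep w ≤ j)]
              rw [if_pos (by rw [hwd])]
              congr 1
              omega
            rw [this, hyb]
  have hfz : f ⟨z, G.refl z⟩ = rB := by
    by_cases hDD : D = 1
    · have : G.dep z ≤ j := by omega
      have e1 : f ⟨z, G.refl z⟩ = PA 1 := by simp only [hf, if_pos this]
      rw [e1]
      exact huniqD _ (by rw [(hP 1 ⟨le_rfl, hD1⟩).1, hDD])
    · have hgt : ¬ G.dep z ≤ j := by omega
      have e1 : f ⟨z, G.refl z⟩ = PA D := by
        simp only [hf]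
        rw [if_neg hgt]
        rw [if_neg (by rw [hzd]; exact hzw.1)]
        congr 1
        omega
      rw [e1]
      exact huniqD _ (by rw [(hP D ⟨hD1, le_rfl⟩).1])
  have hsurj : Function.Surjective f := by
    intro y
    have : B.le (f ⟨z, G.refl z⟩) y := by rw [hfz]; exact hrB y
    obtain ⟨w, -, hw⟩ := hback ⟨z, G.refl z⟩ y this
    exact ⟨w, hw⟩
  exact ⟨z, f, ⟨hmono, hback⟩, hsurj⟩

end Pmorph
/-- Let `L'` be a superintuitionistic logic of infinite depth
properly extending `Box`. Then there is `k` such that every finite rooted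
poset which is a frame for `L'` has stack-depth at most `k`. -/
theorem statement17 (L' : Set Form) (hL : IsSILogic L')
    (hBox : BoxLogic ⊂ L') (hdep : ¬ FiniteDepth L') :
    ∃ k : ℕ, ∀ F : Frame, Finite F.W → F.Rooted →
      (∀ φ ∈ L', F.Valid φ) → ¬ HasStack F (k + 1) := by
  have hBoxL : BoxLogic ⊆ L' := subset_of_ssubset hBox
  obtain ⟨φ0, hφ0L, hφ0B⟩ := Set.not_subset.1 hBox.2
  obtain ⟨B, hBfin, hBroot, hBref, hBw3, hBmax, hBbox'⟩ :=
    IPCX.completeness φ0 hφ0B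
  haveI := hBfin
  have hBbox : ∀ a b : B.W, B.dep b < B.dep a → B.le a b := by
    intro a b h
    exact hBbox' a b _ _ (B.depthEq_dep a) (B.depthEq_dep b) h
  obtain ⟨rB, hrB⟩ := hBroot
  refine ⟨B.dep rB, ?_⟩
  intro F hFfin hFroot hFval hstack
  haveI := hFfin
  have hFbox : ∀ a b : F.W, F.dep b < F.dep a → F.le a b :=
    Frame.G_box F (hFval _ (hBoxL IPCX.wPLax_mem)) hFroot
  obtain ⟨z, hpm⟩ := stack_pmorph F B hFroot hFbox hBbox hBw3 hBmax hrB hstack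
  have hup : (F.up z).Valid φ0 := Valid.up z (hFval φ0 hφ0L)
  exact hBref (Valid.of_pmorphic hpm hup)
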